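/- arXiv:2401.06434 — 5 statements merged into one kernel-verified Lean document; each statement's English description precedes it below -/
import Mathlib

section
/- Let Φ be an Orlicz function with p⁺ = sup_{t>0} tφ(t)/Φ(t), and let Λ > 1. Then there exists a constant C = C(Φ, Λ) > 0 such that for all a, b ∈ [0,∞) and all λ ∈ (1, Λ]: Φ(a+b) ≤ λ·Φ(a) + C/(λ−1)^{p⁺−1} · Φ(b). -/
open Set Filter MeasureTheory

/-- An Orlicz function `Φ` together with its right derivative `φ`:
`Φ` is continuous, convex on `[0,∞)`, vanishes at `0`, satisfies
`Φ(t)/t → 0` as `t → 0⁺`, `Φ(t)/t → ∞` as `t → ∞`, the Δ₂-condition,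
and has the representation `Φ(t) = ∫₀ᵗ φ(s) ds` with `φ` non-decreasing,
right-continuous, `φ(0) = 0`, `φ(t) > 0` for `t > 0`, `φ(t) → ∞`. -/
structure IsOrliczPair (Φ φ : ℝ → ℝ) : Prop where
  continuousOn : ContinuousOn Φ (Ici 0)
  convexOn : ConvexOn ℝ (Ici 0) Φ
  map_zero : Φ 0 = 0
  tendsto_zero : Tendsto (fun t => Φ t / t) (nhdsWithin 0 (Ioi 0)) (nhds 0)
  tendsto_atTop : Tendsto (fun t => Φ t / t) atTop atTop
  delta2 : ∃ C > 0, ∀ t ≥ 0, Φ (2 * t) ≤ C * Φ t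
  rep : ∀ t ≥ 0, Φ t = ∫ s in (0:ℝ)..t, φ s
  deriv_mono : MonotoneOn φ (Ici 0)
  deriv_rightCont : ∀ t ≥ 0, ContinuousWithinAt φ (Ici t) t
  deriv_zero : φ 0 = 0
  deriv_pos : ∀ t > 0, 0 < φ t
  deriv_atTop : Tendsto φ atTop atTop

/-- The set of values `t·φ(t)/Φ(t)` for `t > 0`, whose infimum and supremum
are `p⁻_Φ` and `p⁺_Φ`. -/
def orliczRatioSet (Φ φ : ℝ → ℝ) : Set ℝ := {r : ℝ | ∃ t > 0, r = t * φ t / Φ t}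

namespace OrliczAux

variable {Φ φ : ℝ → ℝ}

lemma phi_nonneg (h : IsOrliczPair Φ φ) {t : ℝ} (ht : 0 ≤ t) : 0 ≤ φ t :=
  h.deriv_zero ▸ h.deriv_mono self_mem_Ici ht ht

lemma phi_intInt (h : IsOrliczPair Φ φ) {a b : ℝ} (ha : 0 ≤ a) (hab : a ≤ b) :
    IntervalIntegrable φ volume a b := by
  refine (h.deriv_mono.mono fun x hx => ?_).intervalIntegrable
  rw [uIcc_of_le hab] at hx
  exact le_trans ha hx.1

lemma Phi_nonneg (h : IsOrliczPair Φ φ) {t : ℝ} (ht : 0 ≤ t) : 0 ≤ Φ t := by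
  rw [h.rep t ht]
  exact intervalIntegral.integral_nonneg ht fun u hu => phi_nonneg h hu.1

lemma Phi_pos (h : IsOrliczPair Φ φ) {t : ℝ} (ht : 0 < t) : 0 < Φ t := by
  have h1 : IntervalIntegrable φ volume 0 (t / 2) := phi_intInt h le_rfl (by linarith)
  have h2 : IntervalIntegrable φ volume (t / 2) t := phi_intInt h (by linarith) (by linarith)
  rw [h.rep t ht.le, ← intervalIntegral.integral_add_adjacent_intervals h1 h2]
  have hA : 0 ≤ ∫ s in (0:ℝ)..(t / 2), φ s :=
    intervalIntegral.integral_nonneg (by linarith) fun u hu => phi_nonneg h hu.1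
  have hB : (t - t / 2) * φ (t / 2) ≤ ∫ s in (t / 2)..t, φ s := by
    have := intervalIntegral.integral_mono_on (by linarith : t / 2 ≤ t)
      (intervalIntegrable_const (c := φ (t / 2))) h2
      (fun x hx => h.deriv_mono (mem_Ici.2 (by linarith)) (mem_Ici.2 (by linarith [hx.1])) hx.1)
    simpa using this
  have hφpos : 0 < φ (t / 2) := h.deriv_pos _ (by linarith)
  nlinarith

lemma Phi_hasDeriv (h : IsOrliczPair Φ φ) {u : ℝ} (hu : 0 ≤ u) :
    HasDerivWithinAt Φ (φ u) (Ici u) u := by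
  have hmeas : StronglyMeasurableAtFilter φ (nhdsWithin u (Ioi u)) volume := by
    refine ⟨Ici 0, mem_of_superset self_mem_nhdsWithin (fun x hx => le_trans hu (le_of_lt hx)), ?_⟩
    have hψ : Monotone fun x => φ (max x 0) := fun x y hxy =>
      h.deriv_mono (mem_Ici.2 (le_max_right _ _)) (mem_Ici.2 (le_max_right _ _)) (max_le_max hxy le_rfl)
    refine hψ.measurable.aestronglyMeasurable.congr ?_
    filter_upwards [ae_restrict_mem measurableSet_Ici] with x hx
    rw [max_eq_left hx]
  have hd : HasDerivWithinAt (fun v => ∫ x in (0:ℝ)..v, φ x) (φ u) (Ici u) u :=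
    intervalIntegral.integral_hasDerivWithinAt_right (phi_intInt h le_rfl hu)
      hmeas ((h.deriv_rightCont u hu).mono Ioi_subset_Ici_self)
  exact hd.congr (fun y hy => h.rep y (le_trans hu hy)) (h.rep u hu)

lemma ratio_le (h : IsOrliczPair Φ φ) {pp : ℝ} (hpp : IsLUB (orliczRatioSet Φ φ) pp)
    {t : ℝ} (ht : 0 < t) : t * φ t ≤ pp * Φ t := by
  have hmem : t * φ t / Φ t ≤ pp := hpp.1 ⟨t, ht, rfl⟩
  rw [div_le_iff₀ (Phi_pos h ht)] at hmem
  linarith [hmem]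

lemma pp_ge_one (h : IsOrliczPair Φ φ) {pp : ℝ} (hpp : IsLUB (orliczRatioSet Φ φ) pp) :
    1 ≤ pp := by
  have hle : Φ 1 ≤ φ 1 := by
    rw [h.rep 1 zero_le_one]
    have := intervalIntegral.integral_mono_on zero_le_one (phi_intInt h le_rfl zero_le_one)
      (intervalIntegrable_const (c := φ 1))
      (fun x hx => h.deriv_mono hx.1 (zero_le_one' ℝ) hx.2)
    simpa using this
  have h1 : (1:ℝ) ≤ 1 * φ 1 / Φ 1 := by
    rw [le_div_iff₀ (Phi_pos h one_pos)]
    linarith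
  exact le_trans h1 (hpp.1 ⟨1, one_pos, rfl⟩)

lemma pow_bound (h : IsOrliczPair Φ φ) {pp : ℝ} (hpp : IsLUB (orliczRatioSet Φ φ) pp)
    {t s : ℝ} (ht : 0 ≤ t) (hs : 1 ≤ s) : Φ (s * t) ≤ s ^ pp * Φ t := by
  rcases eq_or_lt_of_le ht with rfl | ht'
  · simp [h.map_zero, mul_nonneg (Real.rpow_nonneg (by linarith : (0:ℝ) ≤ s) pp)]
  have hs0 : 0 < s := lt_of_lt_of_le one_pos hs
  set b := Real.log s with hbdef
  have hb0 : 0 ≤ b := Real.log_nonneg hs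
  set f : ℝ → ℝ := fun x => Φ (t * Real.exp x) with hfdef
  set f' : ℝ → ℝ := fun x => t * Real.exp x * φ (t * Real.exp x) with hf'def
  have hpos : ∀ x : ℝ, 0 < t * Real.exp x := fun x => mul_pos ht' (Real.exp_pos x)
  have hcont : ContinuousOn f (Icc 0 b) :=
    h.continuousOn.comp ((continuous_const.mul Real.continuous_exp).continuousOn)
      (fun x _ => (hpos x).le)
  have hf' : ∀ x ∈ Ico 0 b, HasDerivWithinAt f (f' x) (Ici x) x := by
    intro x _
    have hg : HasDerivWithinAt (fun x => t * Real.exp x) (t * Real.exp x) (Ici x) x :=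
      ((Real.hasDerivAt_exp x).const_mul t).hasDerivWithinAt
    have hmaps : MapsTo (fun x => t * Real.exp x) (Ici x) (Ici (t * Real.exp x)) :=
      fun y hy => mul_le_mul_of_nonneg_left (Real.exp_le_exp.2 hy) ht'.le
    have := (Phi_hasDeriv h (hpos x).le).comp x hg hmaps
    simpa [hfdef, hf'def, Function.comp_def, mul_comm] using this
  have hfa : ‖f 0‖ ≤ Φ t := by
    simp only [hfdef, Real.exp_zero, mul_one]
    rw [Real.norm_eq_abs, abs_of_nonneg (Phi_nonneg h ht)]
  have hbound : ∀ x ∈ Ico 0 b, ‖f' x‖ ≤ pp * ‖f x‖ + 0 := by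
    intro x _
    rw [add_zero, Real.norm_eq_abs, Real.norm_eq_abs,
      abs_of_nonneg (mul_nonneg (hpos x).le (phi_nonneg h (hpos x).le)),
      abs_of_nonneg (Phi_nonneg h (hpos x).le)]
    exact ratio_le h hpp (hpos x)
  have := norm_le_gronwallBound_of_norm_deriv_right_le hcont hf' hfa hbound b
    (right_mem_Icc.2 hb0)
  rw [gronwallBound_ε0, sub_zero] at this
  rw [Real.norm_eq_abs, abs_of_nonneg (Phi_nonneg h (hpos b).le)] at this
  have hexp : t * Real.exp b = s * t := by
    rw [hbdef, Real.exp_log hs0, mul_comm]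
  have hrpow : Real.exp (pp * b) = s ^ pp := by
    rw [Real.rpow_def_of_pos hs0, mul_comm]
  rw [hexp, hrpow] at this
  linarith [this]

end OrliczAux

open OrliczAux

theorem orlicz_splitting_lemma (Φ φ : ℝ → ℝ) (h : IsOrliczPair Φ φ)
    (pp : ℝ) (hpp : IsLUB (orliczRatioSet Φ φ) pp)
    (Λ : ℝ) (hΛ : 1 < Λ) :
    ∃ C > 0, ∀ a b : ℝ, 0 ≤ a → 0 ≤ b → ∀ lam ∈ Ioc (1:ℝ) Λ,
      Φ (a + b) ≤ lam * Φ a + C / (lam - 1) ^ (pp - 1) * Φ b := by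
  have hpp1 : 1 ≤ pp := pp_ge_one h hpp
  have hppos : 0 < pp := lt_of_lt_of_le one_pos hpp1
  set K : ℝ := pp * Λ with hKdef
  have hK : 0 < K := mul_pos hppos (by linarith)
  refine ⟨K ^ (pp - 1), Real.rpow_pos_of_pos hK _, ?_⟩
  intro a b ha hb lam hlam
  obtain ⟨hlam1, hlamΛ⟩ := hlam
  have hlam0 : 0 < lam := by linarith
  set α : ℝ := pp⁻¹ with hαdef
  have hα : 0 < α := inv_pos.2 hppos
  have hα1 : α ≤ 1 := by
    rw [hαdef]
    exact inv_le_one_of_one_le₀ hpp1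
  set μ : ℝ := lam ^ α with hμdef
  have hμ1 : 1 < μ := Real.one_lt_rpow_iff_of_pos hlam0 |>.2 (Or.inl ⟨hlam1, hα⟩)
  have hμ0 : 0 < μ := by linarith
  set θ : ℝ := μ⁻¹ with hθdef
  have hθ0 : 0 < θ := inv_pos.2 hμ0
  have hθ1 : θ < 1 := inv_lt_one_of_one_lt₀ hμ1
  set d : ℝ := 1 - θ with hddef
  have hd0 : 0 < d := by simp [hddef]; linarith
  have hd1 : d < 1 := by simp [hddef]; linarith
  -- key bound : lam - 1 ≤ K * d
  have hkey : lam - 1 ≤ K * d := by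
    have hβ : (0:ℝ) < lam⁻¹ := inv_pos.2 hlam0
    have hθeq : θ = (lam⁻¹) ^ α := by
      rw [hθdef, hμdef, ← Real.inv_rpow hlam0.le]
    have hAM : (lam⁻¹) ^ α * 1 ^ (1 - α) ≤ α * lam⁻¹ + (1 - α) * 1 :=
      Real.geom_mean_le_arith_mean2_weighted hα.le (by linarith) hβ.le zero_le_one (by ring)
    rw [Real.one_rpow, mul_one, mul_one] at hAM
    have hθle : θ ≤ α * lam⁻¹ + (1 - α) := hθeq ▸ hAM
    have hdge : α * (1 - lam⁻¹) ≤ d := by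
      rw [hddef]; linarith
    have hppα : pp * α = 1 := mul_inv_cancel₀ (ne_of_gt hppos)
    have h1β : 1 - lam⁻¹ = (lam - 1) / lam := by field_simp
    rw [h1β] at hdge
    have h2 : K * (α * ((lam - 1) / lam)) = Λ * (lam - 1) / lam := by
      rw [hKdef, hαdef]
      field_simp
    have h3 : lam - 1 ≤ Λ * (lam - 1) / lam := by
      rw [le_div_iff₀ hlam0]; nlinarith
    calc lam - 1 ≤ Λ * (lam - 1) / lam := h3
      _ = K * (α * ((lam - 1) / lam)) := h2.symm
      _ ≤ K * d := mul_le_mul_of_nonneg_left hdge hK.le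
  have hμθ : θ * μ = 1 := inv_mul_cancel₀ (ne_of_gt hμ0)
  have hdi0 : (0:ℝ) < d⁻¹ := inv_pos.2 hd0
  have hx : μ * a ∈ Ici (0:ℝ) := mem_Ici.2 (mul_nonneg hμ0.le ha)
  have hy : b / d ∈ Ici (0:ℝ) := mem_Ici.2 (div_nonneg hb hd0.le)
  have hconv := h.convexOn.2 hx hy hθ0.le hd0.le (by rw [hddef]; ring)
  have hcomb : θ • (μ * a) + d • (b / d) = a + b := by
    simp only [smul_eq_mul]
    rw [← mul_assoc, hμθ, one_mul, mul_div_cancel₀ _ (ne_of_gt hd0)]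
  have hμpp : μ ^ pp = lam := by
    rw [hμdef, ← Real.rpow_mul hlam0.le, hαdef, inv_mul_cancel₀ (ne_of_gt hppos),
      Real.rpow_one]
  have ht1 : θ * Φ (μ * a) ≤ lam * Φ a := by
    have h1 : Φ (μ * a) ≤ lam * Φ a := by
      have := pow_bound h hpp ha hμ1.le
      rwa [hμpp] at this
    have h2 : θ * Φ (μ * a) ≤ Φ (μ * a) :=
      mul_le_of_le_one_left (Phi_nonneg h (mul_nonneg hμ0.le ha)) hθ1.le
    linarith
  have hd_inv : 1 ≤ d⁻¹ := by
    nlinarith [mul_inv_cancel₀ (ne_of_gt hd0)]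
  have hbd : Φ (b / d) ≤ d⁻¹ ^ pp * Φ b := by
    rw [div_eq_inv_mul]
    exact pow_bound h hpp hb hd_inv
  have hcoef : d * d⁻¹ ^ pp ≤ K ^ (pp - 1) / (lam - 1) ^ (pp - 1) := by
    have hrw : d⁻¹ ^ (pp - 1) = d * d⁻¹ ^ pp := by
      rw [Real.rpow_sub hdi0, Real.rpow_one, div_inv_eq_mul, mul_comm]
    have hle : d⁻¹ ≤ K / (lam - 1) := by
      rw [le_div_iff₀ (by linarith : (0:ℝ) < lam - 1)]
      calc d⁻¹ * (lam - 1) ≤ d⁻¹ * (K * d) :=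
            mul_le_mul_of_nonneg_left hkey hdi0.le
        _ = K := by rw [mul_comm K d, ← mul_assoc, inv_mul_cancel₀ (ne_of_gt hd0), one_mul]
    calc d * d⁻¹ ^ pp = d⁻¹ ^ (pp - 1) := hrw.symm
      _ ≤ (K / (lam - 1)) ^ (pp - 1) :=
          Real.rpow_le_rpow hdi0.le hle (by linarith)
      _ = K ^ (pp - 1) / (lam - 1) ^ (pp - 1) :=
          Real.div_rpow hK.le (by linarith : (0:ℝ) ≤ lam - 1) _
  have ht2 : d * Φ (b / d) ≤ K ^ (pp - 1) / (lam - 1) ^ (pp - 1) * Φ b := by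
    calc d * Φ (b / d) ≤ d * (d⁻¹ ^ pp * Φ b) := mul_le_mul_of_nonneg_left hbd hd0.le
      _ = d * d⁻¹ ^ pp * Φ b := by ring
      _ ≤ K ^ (pp - 1) / (lam - 1) ^ (pp - 1) * Φ b :=
          mul_le_mul_of_nonneg_right hcoef (Phi_nonneg h hb)
  calc Φ (a + b) = Φ (θ • (μ * a) + d • (b / d)) := by rw [hcomb]
    _ ≤ θ • Φ (μ * a) + d • Φ (b / d) := hconv
    _ = θ * Φ (μ * a) + d * Φ (b / d) := by simp [smul_eq_mul]
    _ ≤ lam * Φ a + K ^ (pp - 1) / (lam - 1) ^ (pp - 1) * Φ b := add_le_add ht1 ht2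
end

section
/- Fractional Orlicz–Poincaré–Wirtinger inequality with scaling: let Ω ⊂ ℝ^N (N ≥ 1) be a bounded open set, s ∈ (0,1), λ > 0, and Ω_λ = {λx : x ∈ Ω}. For any Orlicz function Φ there exists a constant C = C(s, N, Ω, Φ) > 0, independent of λ, such that for every u in the fractional Orlicz–Sobolev space W^{s,Φ}(Ω_λ): ∫_{Ω_λ} Φ(|u(x) − (u)_{Ω_λ}|) dx ≤ C ∫_{Ω_λ}∫_{Ω_λ} Φ(λ^s |u(x)−u(y)|/|x−y|^s) dx dy / |x−y|^N, where (u)_{Ω_λ} denotes the average of u over Ω_λ. -/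
open Set Filter MeasureTheory Pointwise

/-- An Orlicz function: continuous, convex on `[0,∞)`, `Φ(0)=0`,
`Φ(t)/t → 0` as `t → 0⁺`, `Φ(t)/t → ∞` as `t → ∞`, Δ₂-condition. -/
structure IsOrlicz (Φ : ℝ → ℝ) : Prop where
  continuousOn : ContinuousOn Φ (Ici 0)
  convexOn : ConvexOn ℝ (Ici 0) Φ
  map_zero : Φ 0 = 0
  tendsto_zero : Tendsto (fun t => Φ t / t) (nhdsWithin 0 (Ioi 0)) (nhds 0)
  tendsto_atTop : Tendsto (fun t => Φ t / t) atTop atTop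
  delta2 : ∃ C > 0, ∀ t ≥ 0, Φ (2 * t) ≤ C * Φ t

/-- Convexity with endpoints `0` and `b` gives `Φ a ≤ (a/b) Φ b`. -/
lemma IsOrlicz.chord {Φ : ℝ → ℝ} (hΦ : IsOrlicz Φ) {a b : ℝ}
    (ha : 0 ≤ a) (hab : a ≤ b) (hb : 0 < b) : Φ a ≤ (a / b) * Φ b := by
  have hd : a / b ≤ 1 := (div_le_one hb).2 hab
  have h := hΦ.convexOn.2 (self_mem_Ici (a := (0:ℝ))) (mem_Ici.2 hb.le)
    (show (0:ℝ) ≤ 1 - a / b by linarith) (div_nonneg ha hb.le) (by ring)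
  simp only [smul_eq_mul, mul_zero, zero_add, hΦ.map_zero] at h
  rw [div_mul_cancel₀ _ hb.ne'] at h
  linarith

/-- An Orlicz function is nonnegative on `[0,∞)`. -/
lemma IsOrlicz.nonneg {Φ : ℝ → ℝ} (hΦ : IsOrlicz Φ) {t : ℝ} (ht : 0 ≤ t) : 0 ≤ Φ t := by
  rcases eq_or_lt_of_le ht with h | h
  · rw [← h, hΦ.map_zero]
  · have hq : (0:ℝ) ≤ Φ t / t := by
      refine le_of_tendsto hΦ.tendsto_zero ?_
      filter_upwards [Ioo_mem_nhdsGT_of_mem (left_mem_Ico.2 h)] with ε hε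
      have hch := hΦ.chord hε.1.le hε.2.le h
      rw [div_le_div_iff₀ hε.1 h]
      have h2 : Φ ε * t ≤ (ε / t * Φ t) * t := mul_le_mul_of_nonneg_right hch h.le
      have h3 : (ε / t * Φ t) * t = Φ t * ε := by field_simp
      linarith
    have := mul_nonneg hq h.le
    rwa [div_mul_cancel₀ _ h.ne'] at this

/-- An Orlicz function is monotone on `[0,∞)`. -/
lemma IsOrlicz.mono {Φ : ℝ → ℝ} (hΦ : IsOrlicz Φ) {a b : ℝ}
    (ha : 0 ≤ a) (hab : a ≤ b) : Φ a ≤ Φ b := by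
  rcases eq_or_lt_of_le (ha.trans hab) with h | hb
  · have ha0 : a = 0 := le_antisymm (hab.trans h.symm.le) ha
    rw [ha0, ← h]
  · calc Φ a ≤ (a / b) * Φ b := hΦ.chord ha hab hb
      _ ≤ 1 * Φ b :=
        mul_le_mul_of_nonneg_right ((div_le_one hb).2 hab) (hΦ.nonneg (ha.trans hab))
      _ = Φ b := one_mul _

/-- Δ₂ amplification: for every fixed factor `A ≥ 0` there is `K > 0` with
`Φ(A t) ≤ K Φ(t)` for all `t ≥ 0`. -/
lemma IsOrlicz.scale {Φ : ℝ → ℝ} (hΦ : IsOrlicz Φ) {A : ℝ} (hA : 0 ≤ A) :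
    ∃ K > 0, ∀ t ≥ 0, Φ (A * t) ≤ K * Φ t := by
  obtain ⟨c, hc, hd⟩ := hΦ.delta2
  obtain ⟨n, hn⟩ := pow_unbounded_of_one_lt A (one_lt_two (α := ℝ))
  have key : ∀ m : ℕ, ∀ t ≥ 0, Φ (2 ^ m * t) ≤ c ^ m * Φ t := by
    intro m
    induction m with
    | zero => intro t ht; simp
    | succ m ih =>
      intro t ht
      have h1 : (2:ℝ) ^ (m + 1) * t = 2 * (2 ^ m * t) := by ring
      rw [h1]
      calc Φ (2 * (2 ^ m * t)) ≤ c * Φ (2 ^ m * t) := hd _ (by positivity)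
        _ ≤ c * (c ^ m * Φ t) := mul_le_mul_of_nonneg_left (ih t ht) hc.le
        _ = c ^ (m + 1) * Φ t := by ring
  exact ⟨c ^ n, pow_pos hc n, fun t ht =>
    (hΦ.mono (mul_nonneg hA ht) (mul_le_mul_of_nonneg_right hn.le ht)).trans (key n t ht)⟩

/-- Fractional Orlicz–Poincaré–Wirtinger inequality on dilates `Ω_λ = λ·Ω`,
with a constant independent of the dilation parameter. -/
theorem fractional_orlicz_poincare_wirtinger
    (N : ℕ) (hN : 1 ≤ N) (Ω : Set (EuclideanSpace ℝ (Fin N)))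
    (hΩo : IsOpen Ω) (hΩb : Bornology.IsBounded Ω)
    (s : ℝ) (hs : s ∈ Ioo (0:ℝ) 1) (Φ : ℝ → ℝ) (hΦ : IsOrlicz Φ) :
    ∃ C > 0, ∀ l : ℝ, 0 < l →
      ∀ u : EuclideanSpace ℝ (Fin N) → ℝ, Measurable u →
        IntegrableOn u (l • Ω) →
        (∫⁻ x in l • Ω, ENNReal.ofReal (Φ |u x - ⨍ y in l • Ω, u y|)) ≤
          ENNReal.ofReal C *
            ∫⁻ x in l • Ω, ∫⁻ y in l • Ω,
              ENNReal.ofReal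
                (Φ (l ^ s * (|u x - u y| / ‖x - y‖ ^ s)) / ‖x - y‖ ^ (N:ℝ)) := by
  obtain ⟨hs0, hs1⟩ := hs
  obtain ⟨R, hR⟩ := hΩb.subset_closedBall 0
  set D : ℝ := 2 * max R 1 with hDdef
  have hD0 : (0:ℝ) < D := by positivity
  have hdist : ∀ x ∈ Ω, ∀ y ∈ Ω, ‖x - y‖ ≤ D := by
    intro x hx y hy
    have hx' := mem_closedBall_iff_norm.1 (hR hx)
    have hy' := mem_closedBall_iff_norm.1 (hR hy)
    simp only [sub_zero] at hx' hy'
    calc ‖x - y‖ ≤ ‖x‖ + ‖y‖ := norm_sub_le _ _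
      _ ≤ R + R := add_le_add hx' hy'
      _ ≤ D := by rw [hDdef]; nlinarith [le_max_left R 1, le_max_right R 1]
  obtain ⟨K, hK0, hKΦ⟩ := hΦ.scale (A := D ^ s) (Real.rpow_nonneg hD0.le s)
  rcases eq_empty_or_nonempty Ω with rfl | hne
  · refine ⟨1, one_pos, fun l hl u hu hui => ?_⟩
    simp
  have hμ0 : volume Ω ≠ 0 := (hΩo.measure_pos volume hne).ne'
  have hμT : volume Ω ≠ ⊤ := hΩb.measure_lt_top.ne
  have hμtr : 0 < (volume Ω).toReal := ENNReal.toReal_pos hμ0 hμT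
  refine ⟨K * D ^ (N:ℝ) / (volume Ω).toReal, by positivity, ?_⟩
  intro l hl u hu hui
  set S : Set (EuclideanSpace ℝ (Fin N)) := l • Ω with hSdef
  have hSo : IsOpen S := hΩo.smul₀ hl.ne'
  have hSm : MeasurableSet S := hSo.measurableSet
  have hvol : volume S = ENNReal.ofReal (l ^ N) * volume Ω := by
    rw [hSdef, Measure.addHaar_smul, finrank_euclideanSpace_fin,
      abs_of_nonneg (by positivity)]
  have hlN : (0:ℝ) < l ^ N := by positivity
  have hS0 : volume S ≠ 0 := by
    rw [hvol]
    exact mul_ne_zero (by simp [ENNReal.ofReal_eq_zero, not_le, hlN]) hμ0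
  have hST : volume S ≠ ⊤ := by
    rw [hvol]; exact ENNReal.mul_ne_top ENNReal.ofReal_ne_top hμT
  have hStr : 0 < (volume S).toReal := ENNReal.toReal_pos hS0 hST
  haveI : IsFiniteMeasure (volume.restrict S) :=
    ⟨by rw [Measure.restrict_apply_univ]; exact lt_top_iff_ne_top.2 hST⟩
  haveI : NeZero (volume.restrict S) := ⟨fun h => hS0 (Measure.restrict_eq_zero.1 h)⟩
  have hdistS : ∀ x ∈ S, ∀ y ∈ S, ‖x - y‖ ≤ l * D := by
    rintro x ⟨a, ha, rfl⟩ y ⟨b, hb, rfl⟩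
    have : (l • a : EuclideanSpace ℝ (Fin N)) - l • b = l • (a - b) := (smul_sub l a b).symm
    rw [this, norm_smul, Real.norm_eq_abs, abs_of_pos hl]
    exact mul_le_mul_of_nonneg_left (hdist a ha b hb) hl.le
  -- measurability of Φ on nonnegative arguments
  have hΨc : Continuous fun t : ℝ => Φ |t| := by
    rw [← continuousOn_univ]
    exact hΦ.continuousOn.comp continuous_abs.continuousOn (fun t _ => abs_nonneg t)
  set avg : ℝ := ⨍ y in S, u y with havg
  -- Step 1: Jensen
  have jensen : ∀ x, ENNReal.ofReal (Φ |u x - avg|) ≤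
      (volume S)⁻¹ * ∫⁻ y in S, ENNReal.ofReal (Φ |u x - u y|) := by
    intro x
    have hfm : Measurable fun y => Φ |u x - u y| :=
      hΨc.measurable.comp (measurable_const.sub hu)
    have hfnn : ∀ y, 0 ≤ Φ |u x - u y| := fun y => hΦ.nonneg (abs_nonneg _)
    by_cases hint : Integrable (fun y => Φ |u x - u y|) (volume.restrict S)
    · have habs : Integrable (fun y => |u x - u y|) (volume.restrict S) :=
        ((integrable_const (u x)).sub hui).abs
      have hj : Φ (⨍ y in S, |u x - u y|) ≤ ⨍ y in S, Φ |u x - u y| :=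
        hΦ.convexOn.map_average_le hΦ.continuousOn isClosed_Ici
          (ae_of_all _ fun y => mem_Ici.2 (abs_nonneg _)) habs hint
      have hsub : ⨍ y in S, (u x - u y) = u x - avg := by
        rw [havg, setAverage_eq, setAverage_eq,
          integral_sub (integrable_const (u x)) hui, setIntegral_const]
        rw [measureReal_def, smul_sub, smul_smul, inv_mul_cancel₀ hStr.ne', one_smul]
      have habs_le : |u x - avg| ≤ ⨍ y in S, |u x - u y| := by
        rw [← hsub, setAverage_eq, setAverage_eq, smul_eq_mul, smul_eq_mul, measureReal_def,
          abs_mul, abs_of_nonneg (inv_nonneg.2 ENNReal.toReal_nonneg)]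
        exact mul_le_mul_of_nonneg_left
          (by simpa [Real.norm_eq_abs] using
            norm_integral_le_integral_norm (μ := volume.restrict S) (fun y => u x - u y)) (inv_nonneg.2 ENNReal.toReal_nonneg)
      have h1 : Φ |u x - avg| ≤ ⨍ y in S, Φ |u x - u y| :=
        (hΦ.mono (abs_nonneg _) habs_le).trans hj
      have h2 : ENNReal.ofReal (⨍ y in S, Φ |u x - u y|) =
          (volume S)⁻¹ * ∫⁻ y in S, ENNReal.ofReal (Φ |u x - u y|) := by
        rw [setAverage_eq, smul_eq_mul, measureReal_def,
          ENNReal.ofReal_mul (inv_nonneg.2 ENNReal.toReal_nonneg),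
          ofReal_integral_eq_lintegral_ofReal hint (ae_of_all _ hfnn),
          ENNReal.ofReal_inv_of_pos hStr, ENNReal.ofReal_toReal hST]
      calc ENNReal.ofReal (Φ |u x - avg|) ≤
          ENNReal.ofReal (⨍ y in S, Φ |u x - u y|) := ENNReal.ofReal_le_ofReal h1
        _ = _ := h2
    · have htop : (∫⁻ y in S, ENNReal.ofReal (Φ |u x - u y|)) = ⊤ := by
        by_contra h
        exact hint ⟨hfm.aestronglyMeasurable,
          (hasFiniteIntegral_iff_ofReal (ae_of_all _ hfnn)).2 (lt_top_iff_ne_top.2 h)⟩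
      rw [htop, ENNReal.mul_top (ENNReal.inv_ne_zero.2 hST)]
      exact le_top
  -- Step 2: pointwise bound
  have pw : ∀ x ∈ S, ∀ y ∈ S, Φ |u x - u y| ≤
      (K * (l * D) ^ (N:ℝ)) *
        (Φ (l ^ s * (|u x - u y| / ‖x - y‖ ^ s)) / ‖x - y‖ ^ (N:ℝ)) := by
    intro x hx y hy
    rcases eq_or_ne x y with rfl | hxy
    · simp [sub_self, abs_zero, hΦ.map_zero, Real.zero_rpow hs0.ne']
    · have hr0 : (0:ℝ) < ‖x - y‖ := by
        rw [norm_sub_pos_iff]; exact hxy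
      have hrD : ‖x - y‖ ≤ l * D := hdistS x hx y hy
      set q : ℝ := |u x - u y| / ‖x - y‖ ^ s with hqdef
      have hq0 : 0 ≤ q := div_nonneg (abs_nonneg _) (Real.rpow_nonneg hr0.le s)
      have hrs : (0:ℝ) < ‖x - y‖ ^ s := Real.rpow_pos_of_pos hr0 s
      have h1 : |u x - u y| = q * ‖x - y‖ ^ s := (div_mul_cancel₀ _ hrs.ne').symm
      have h2 : |u x - u y| ≤ D ^ s * (l ^ s * q) := by
        rw [h1]
        calc q * ‖x - y‖ ^ s ≤ q * (l * D) ^ s :=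
            mul_le_mul_of_nonneg_left (Real.rpow_le_rpow hr0.le hrD hs0.le) hq0
          _ = D ^ s * (l ^ s * q) := by
            rw [Real.mul_rpow hl.le hD0.le]; ring
      have hls : 0 ≤ l ^ s * q := mul_nonneg (Real.rpow_nonneg hl.le s) hq0
      have h3 : Φ |u x - u y| ≤ K * Φ (l ^ s * q) :=
        (hΦ.mono (abs_nonneg _) h2).trans (hKΦ _ hls)
      have hΦnn : 0 ≤ Φ (l ^ s * q) := hΦ.nonneg hls
      have h4 : Φ (l ^ s * q) ≤ (l * D) ^ (N:ℝ) * (Φ (l ^ s * q) / ‖x - y‖ ^ (N:ℝ)) := by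
        have hrN : (0:ℝ) < ‖x - y‖ ^ (N:ℝ) := Real.rpow_pos_of_pos hr0 _
        calc Φ (l ^ s * q) = (Φ (l ^ s * q) / ‖x - y‖ ^ (N:ℝ)) * ‖x - y‖ ^ (N:ℝ) :=
            (div_mul_cancel₀ _ hrN.ne').symm
          _ ≤ (Φ (l ^ s * q) / ‖x - y‖ ^ (N:ℝ)) * (l * D) ^ (N:ℝ) :=
            mul_le_mul_of_nonneg_left
              (Real.rpow_le_rpow hr0.le hrD (Nat.cast_nonneg N))
              (div_nonneg hΦnn hrN.le)
          _ = (l * D) ^ (N:ℝ) * (Φ (l ^ s * q) / ‖x - y‖ ^ (N:ℝ)) := mul_comm _ _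
      calc Φ |u x - u y| ≤ K * Φ (l ^ s * q) := h3
        _ ≤ K * ((l * D) ^ (N:ℝ) * (Φ (l ^ s * q) / ‖x - y‖ ^ (N:ℝ))) :=
          mul_le_mul_of_nonneg_left h4 hK0.le
        _ = (K * (l * D) ^ (N:ℝ)) * (Φ (l ^ s * q) / ‖x - y‖ ^ (N:ℝ)) :=
          (mul_assoc _ _ _).symm
  -- positivity of the whole-number constant
  have hcK : (0:ℝ) ≤ K * (l * D) ^ (N:ℝ) :=
    mul_nonneg hK0.le (Real.rpow_nonneg (by positivity) _)
  have hinner_nn : ∀ x y : EuclideanSpace ℝ (Fin N),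
      0 ≤ Φ (l ^ s * (|u x - u y| / ‖x - y‖ ^ s)) / ‖x - y‖ ^ (N:ℝ) := by
    intro x y
    apply div_nonneg _ (Real.rpow_nonneg (norm_nonneg _) _)
    exact hΦ.nonneg (mul_nonneg (Real.rpow_nonneg hl.le s)
      (div_nonneg (abs_nonneg _) (Real.rpow_nonneg (norm_nonneg _) _)))
  -- put things together
  have step1 : (∫⁻ x in S, ENNReal.ofReal (Φ |u x - avg|)) ≤
      (volume S)⁻¹ * ∫⁻ x in S, ∫⁻ y in S, ENNReal.ofReal (Φ |u x - u y|) := by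
    calc (∫⁻ x in S, ENNReal.ofReal (Φ |u x - avg|)) ≤
        ∫⁻ x in S, (volume S)⁻¹ * ∫⁻ y in S, ENNReal.ofReal (Φ |u x - u y|) :=
          lintegral_mono fun x => jensen x
      _ = _ := lintegral_const_mul' _ _ (by simp [hS0])
  have step2 : (∫⁻ x in S, ∫⁻ y in S, ENNReal.ofReal (Φ |u x - u y|)) ≤
      ENNReal.ofReal (K * (l * D) ^ (N:ℝ)) *
        ∫⁻ x in S, ∫⁻ y in S, ENNReal.ofReal
          (Φ (l ^ s * (|u x - u y| / ‖x - y‖ ^ s)) / ‖x - y‖ ^ (N:ℝ)) := by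
    rw [← lintegral_const_mul' _ _ ENNReal.ofReal_ne_top]
    refine lintegral_mono_ae ?_
    filter_upwards [ae_restrict_mem hSm] with x hx
    rw [← lintegral_const_mul' _ _ ENNReal.ofReal_ne_top]
    refine lintegral_mono_ae ?_
    filter_upwards [ae_restrict_mem hSm] with y hy
    rw [← ENNReal.ofReal_mul hcK]
    exact ENNReal.ofReal_le_ofReal (pw x hx y hy)
  -- combine constants
  have hconst : (volume S)⁻¹ * ENNReal.ofReal (K * (l * D) ^ (N:ℝ)) =
      ENNReal.ofReal (K * D ^ (N:ℝ) / (volume Ω).toReal) := by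
    have h1 : (K * (l * D) ^ (N:ℝ)) = l ^ N * (K * D ^ (N:ℝ)) := by
      rw [Real.mul_rpow hl.le hD0.le, Real.rpow_natCast]; ring
    rw [h1, hvol, ENNReal.ofReal_mul hlN.le,
      ENNReal.mul_inv (Or.inl (by simp [ENNReal.ofReal_eq_zero, not_le, hlN])) (Or.inl ENNReal.ofReal_ne_top)]
    rw [ENNReal.ofReal_div_of_pos hμtr, ENNReal.ofReal_toReal hμT]
    rw [div_eq_mul_inv]
    calc (ENNReal.ofReal (l ^ N))⁻¹ * (volume Ω)⁻¹ *
          (ENNReal.ofReal (l ^ N) * ENNReal.ofReal (K * D ^ (N:ℝ)))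
        = ((ENNReal.ofReal (l ^ N))⁻¹ * ENNReal.ofReal (l ^ N)) *
            ((volume Ω)⁻¹ * ENNReal.ofReal (K * D ^ (N:ℝ))) := by ring
      _ = (volume Ω)⁻¹ * ENNReal.ofReal (K * D ^ (N:ℝ)) := by
          rw [ENNReal.inv_mul_cancel (by simp [ENNReal.ofReal_eq_zero, not_le, hlN])
            ENNReal.ofReal_ne_top, one_mul]
      _ = ENNReal.ofReal (K * D ^ (N:ℝ)) * (volume Ω)⁻¹ := mul_comm _ _
  calc (∫⁻ x in S, ENNReal.ofReal (Φ |u x - avg|)) ≤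
      (volume S)⁻¹ * ∫⁻ x in S, ∫⁻ y in S, ENNReal.ofReal (Φ |u x - u y|) := step1
    _ ≤ (volume S)⁻¹ * (ENNReal.ofReal (K * (l * D) ^ (N:ℝ)) *
        ∫⁻ x in S, ∫⁻ y in S, ENNReal.ofReal
          (Φ (l ^ s * (|u x - u y| / ‖x - y‖ ^ s)) / ‖x - y‖ ^ (N:ℝ))) :=
      mul_le_mul_right step2 _
    _ = ((volume S)⁻¹ * ENNReal.ofReal (K * (l * D) ^ (N:ℝ))) *
        ∫⁻ x in S, ∫⁻ y in S, ENNReal.ofReal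
          (Φ (l ^ s * (|u x - u y| / ‖x - y‖ ^ s)) / ‖x - y‖ ^ (N:ℝ)) :=
      (mul_assoc _ _ _).symm
    _ = _ := by rw [hconst]
end

section
/- Let N ≥ 1, s ∈ (0,1), R > 0, α₁, α₂ ∈ ℝ, γ = s − α₁ − α₂, and Φ an Orlicz function. Let A_k = {x ∈ ℝ^N : 2^k R ≤ |x| < 2^{k+1} R}. Then there exists C = C(s,α₁,α₂,N,R,Φ) > 0 such that for every u ∈ C_c¹(ℝ^N) and k ∈ ℤ: ∫_{A_k} Φ(|u(x)|/|x|^γ) dx ≤ C·2^{kN}·Φ(2^{−kγ}|(u)_{A_k}|) + C ∫_{A_k}∫_{A_k} Φ(|x|^{α₁}|y|^{α₂}|D_s u(x,y)|) dμ, where (u)_{A_k} is the average of u over A_k, D_s u(x,y) = (u(x)−u(y))/|x−y|^s, and dμ = dx dy/|x−y|^N. -/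
open Set Filter MeasureTheory
open scoped ENNReal NNReal

namespace IsOrlicz

variable {Φ : ℝ → ℝ}

lemma slope (hΦ : IsOrlicz Φ) {r t : ℝ} (hr : 0 ≤ r) (hrt : r ≤ t) (ht : 0 < t) :
    Φ r ≤ (r / t) * Φ t := by
  have ha : (0:ℝ) ≤ 1 - r / t := by
    have : r / t ≤ 1 := (div_le_one ht).2 hrt
    linarith
  have hb : (0:ℝ) ≤ r / t := div_nonneg hr ht.le
  have h := hΦ.convexOn.2 (mem_Ici.mpr (le_refl (0:ℝ))) (mem_Ici.mpr ht.le) ha hb (by ring)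
  have e1 : (1 - r/t) • (0:ℝ) + (r/t) • t = r := by
    rw [smul_eq_mul, smul_eq_mul, mul_zero, zero_add, div_mul_cancel₀ r ht.ne']
  rw [e1] at h
  simpa [hΦ.map_zero, smul_eq_mul] using h

lemma nonneg_s13 (hΦ : IsOrlicz Φ) {t : ℝ} (ht : 0 ≤ t) : 0 ≤ Φ t := by
  rcases ht.eq_or_lt with h | h
  · simp [← h, hΦ.map_zero]
  · have key : ∀ r ∈ Ioo (0:ℝ) t, Φ r / r ≤ Φ t / t := by
      intro r hr
      have h1 : Φ r ≤ (r / t) * Φ t := hΦ.slope hr.1.le hr.2.le h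
      rw [div_le_div_iff₀ hr.1 h]
      calc Φ r * t ≤ ((r / t) * Φ t) * t := mul_le_mul_of_nonneg_right h1 h.le
        _ = Φ t * r := by field_simp
    have h2 : (0:ℝ) ≤ Φ t / t := by
      have hev : ∀ᶠ r in nhdsWithin 0 (Ioi 0), Φ r / r ≤ Φ t / t := by
        filter_upwards [Ioo_mem_nhdsGT_of_mem (show (0:ℝ) ∈ Ico (0:ℝ) t from ⟨le_refl _, h⟩)]
          with r hr using key r hr
      exact le_of_tendsto hΦ.tendsto_zero hev
    have h3 := mul_nonneg h2 h.le
    rwa [div_mul_cancel₀ _ h.ne'] at h3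

lemma mono_s13 (hΦ : IsOrlicz Φ) {a b : ℝ} (ha : 0 ≤ a) (hab : a ≤ b) : Φ a ≤ Φ b := by
  rcases (ha.trans hab).eq_or_lt with h | h
  · have h0 : a = 0 := le_antisymm (hab.trans h.symm.le) ha
    rw [h0, hΦ.map_zero]
    exact hΦ.nonneg_s13 (ha.trans hab)
  · calc Φ a ≤ (a / b) * Φ b := hΦ.slope ha hab h
      _ ≤ 1 * Φ b := mul_le_mul_of_nonneg_right ((div_le_one h).2 hab) (hΦ.nonneg_s13 h.le)
      _ = Φ b := one_mul _

lemma pow2 (hΦ : IsOrlicz Φ) {D : ℝ} (hD1 : 1 ≤ D) (hD : ∀ t, 0 ≤ t → Φ (2 * t) ≤ D * Φ t)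
    (m : ℕ) {t : ℝ} (ht : 0 ≤ t) : Φ (2 ^ m * t) ≤ D ^ m * Φ t := by
  induction m with
  | zero => simp
  | succ n ih =>
    have e : (2:ℝ) ^ (n + 1) * t = 2 * (2 ^ n * t) := by ring
    rw [e]
    calc Φ (2 * (2 ^ n * t)) ≤ D * Φ (2 ^ n * t) := hD _ (by positivity)
      _ ≤ D * (D ^ n * Φ t) :=
        mul_le_mul_of_nonneg_left ih (le_trans zero_le_one hD1)
      _ = D ^ (n + 1) * Φ t := by ring

lemma scale_s13 (hΦ : IsOrlicz Φ) {D : ℝ} (hD1 : 1 ≤ D) (hD : ∀ t, 0 ≤ t → Φ (2 * t) ≤ D * Φ t)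
    (m : ℕ) {lam t : ℝ} (h0 : 0 ≤ lam) (h1 : lam ≤ 2 ^ m) (ht : 0 ≤ t) :
    Φ (lam * t) ≤ D ^ m * Φ t :=
  le_trans (hΦ.mono_s13 (mul_nonneg h0 ht) (mul_le_mul_of_nonneg_right h1 ht))
    (hΦ.pow2 hD1 hD m ht)

lemma add_le (hΦ : IsOrlicz Φ) {D : ℝ} (hD1 : 1 ≤ D) (hD : ∀ t, 0 ≤ t → Φ (2 * t) ≤ D * Φ t)
    {a b : ℝ} (ha : 0 ≤ a) (hb : 0 ≤ b) : Φ (a + b) ≤ D * (Φ a + Φ b) := by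
  have e : a + b = 2 * ((a + b) / 2) := by ring
  have mid : Φ ((a + b) / 2) ≤ (Φ a + Φ b) / 2 := by
    have h := hΦ.convexOn.2 (mem_Ici.mpr ha) (mem_Ici.mpr hb)
      (by norm_num : (0:ℝ) ≤ 1/2) (by norm_num : (0:ℝ) ≤ 1/2) (by norm_num)
    have e1 : (1/2 : ℝ) • a + (1/2 : ℝ) • b = (a + b) / 2 := by
      simp only [smul_eq_mul]; ring
    rw [e1] at h
    calc Φ ((a+b)/2) ≤ (1/2:ℝ) * Φ a + (1/2:ℝ) * Φ b := by simpa [smul_eq_mul] using h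
      _ = (Φ a + Φ b) / 2 := by ring
  calc Φ (a + b) = Φ (2 * ((a + b) / 2)) := by rw [← e]
    _ ≤ D * Φ ((a + b) / 2) := hD _ (by positivity)
    _ ≤ D * ((Φ a + Φ b) / 2) :=
      mul_le_mul_of_nonneg_left mid (le_trans zero_le_one hD1)
    _ ≤ D * (Φ a + Φ b) := by
      have hsum : 0 ≤ Φ a + Φ b := add_nonneg (hΦ.nonneg_s13 ha) (hΦ.nonneg_s13 hb)
      nlinarith

end IsOrlicz

lemma rpow_mem_bound {a z e : ℝ} (ha : 0 < a) (h1 : a ≤ z) (h2 : z ≤ 2 * a) :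
    z ^ e ≤ a ^ e * max 1 (2 ^ e) := by
  rcases le_or_gt 0 e with he | he
  · calc z ^ e ≤ (2 * a) ^ e := Real.rpow_le_rpow (by linarith) h2 he
      _ = 2 ^ e * a ^ e := Real.mul_rpow (by norm_num) ha.le
      _ ≤ a ^ e * max 1 (2 ^ e) := by
        rw [mul_comm]
        exact mul_le_mul_of_nonneg_left (le_max_right _ _) (Real.rpow_nonneg ha.le e)
  · calc z ^ e ≤ a ^ e := Real.rpow_le_rpow_of_nonpos ha h1 he.le
      _ ≤ a ^ e * max 1 (2 ^ e) :=
        le_mul_of_one_le_right (Real.rpow_nonneg ha.le e) (le_max_left _ _)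

lemma measurable_rpow_const' (e : ℝ) : Measurable (fun t : ℝ => t ^ e) :=
  measurable_of_continuousOn_compl_singleton 0
    (fun x hx => (Real.continuousAt_rpow_const x e (Or.inl hx)).continuousWithinAt)


set_option maxHeartbeats 2000000 in
/-- Annular estimate (i): the Orlicz integral of `|u|/|x|^γ` over the dyadic
annulus `A_k = {2^k R ≤ |x| < 2^{k+1} R}` is controlled by the average of `u`
over `A_k` and the weighted fractional seminorm over `A_k`. -/
theorem annulus_estimate_one
    (N : ℕ) (hN : 1 ≤ N) (s α₁ α₂ R : ℝ) (hs : s ∈ Ioo (0:ℝ) 1) (hR : 0 < R)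
    (Φ : ℝ → ℝ) (hΦ : IsOrlicz Φ) (γ : ℝ) (hγ : γ = s - α₁ - α₂)
    (A : ℤ → Set (EuclideanSpace ℝ (Fin N)))
    (hA : ∀ k, A k = {x | (2:ℝ) ^ k * R ≤ ‖x‖ ∧ ‖x‖ < (2:ℝ) ^ (k + 1) * R}) :
    ∃ C > 0, ∀ u : EuclideanSpace ℝ (Fin N) → ℝ,
      ContDiff ℝ 1 u → HasCompactSupport u → ∀ k : ℤ,
      (∫⁻ x in A k, ENNReal.ofReal (Φ (|u x| / ‖x‖ ^ γ))) ≤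
        ENNReal.ofReal
          (C * (2:ℝ) ^ ((k:ℝ) * N) *
            Φ ((2:ℝ) ^ (-(k:ℝ) * γ) * |⨍ x in A k, u x|)) +
        ENNReal.ofReal C *
          ∫⁻ x in A k, ∫⁻ y in A k, ENNReal.ofReal
            (Φ (‖x‖ ^ α₁ * ‖y‖ ^ α₂ * (|u x - u y| / ‖x - y‖ ^ s)) /
              ‖x - y‖ ^ (N:ℝ)) := by
  obtain ⟨C₂, hC₂pos, hC₂⟩ := hΦ.delta2
  set D : ℝ := max C₂ 1 with hDdef
  have hD1 : (1:ℝ) ≤ D := le_max_right _ _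
  have hDpos : (0:ℝ) < D := lt_of_lt_of_le one_pos hD1
  have hD : ∀ t, 0 ≤ t → Φ (2 * t) ≤ D * Φ t := fun t ht =>
    (hC₂ t ht).trans (mul_le_mul_of_nonneg_right (le_max_left _ _) (hΦ.nonneg_s13 ht))
  set Λ₁ : ℝ := R ^ (-γ) * max 1 ((2:ℝ) ^ (-γ)) with hΛ₁def
  set Λ₂ : ℝ := (4:ℝ) ^ s * (max 1 ((2:ℝ) ^ (α₂ - s)) * max 1 ((2:ℝ) ^ (-α₂))) with hΛ₂def
  obtain ⟨m₁, hm₁⟩ : ∃ m : ℕ, Λ₁ < 2 ^ m := pow_unbounded_of_one_lt Λ₁ one_lt_two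
  obtain ⟨m₂, hm₂⟩ : ∃ m : ℕ, Λ₂ < 2 ^ m := pow_unbounded_of_one_lt Λ₂ one_lt_two
  set K₁ : ℝ := D ^ m₁ with hK₁def
  set K₂ : ℝ := D ^ m₂ with hK₂def
  have hK₁pos : 0 < K₁ := pow_pos hDpos m₁
  have hK₂pos : 0 < K₂ := pow_pos hDpos m₂
  haveI : Nonempty (Fin N) := ⟨⟨0, hN⟩⟩
  haveI : Nontrivial (EuclideanSpace ℝ (Fin N)) := by
    refine ⟨0, EuclideanSpace.single ⟨0, hN⟩ 1, fun h => ?_⟩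
    have h0 := congrArg (fun v : EuclideanSpace ℝ (Fin N) => v ⟨0, hN⟩) h
    simp [EuclideanSpace.single_apply] at h0
  set c : ℝ≥0∞ := volume (Metric.ball (0 : EuclideanSpace ℝ (Fin N)) 1) with hcdef
  have hc_pos : 0 < c := Metric.measure_ball_pos _ _ one_pos
  have hc_fin : c ≠ ⊤ := measure_ball_lt_top.ne
  set cB : ℝ := c.toReal with hcBdef
  have hcB_pos : 0 < cB := ENNReal.toReal_pos hc_pos.ne' hc_fin
  have hball : ∀ r : ℝ, 0 ≤ r →
      volume (Metric.ball (0 : EuclideanSpace ℝ (Fin N)) r) = ENNReal.ofReal (r ^ N) * c := by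
    intro r hr
    simpa [finrank_euclideanSpace_fin] using
      MeasureTheory.Measure.addHaar_ball (volume) (0 : EuclideanSpace ℝ (Fin N)) hr
  set C : ℝ := max (D * K₁ * 2 ^ N * R ^ N * cB) (D * K₂ * 4 ^ N / cB) with hCdef
  have hCpos : 0 < C := by
    apply lt_max_of_lt_left
    have : (0:ℝ) < 2 ^ N := by positivity
    have : (0:ℝ) < R ^ N := pow_pos hR N
    positivity
  refine ⟨C, hCpos, ?_⟩
  intro u hu hsupp k
  have hu_cont : Continuous u := hu.continuous
  obtain ⟨L, hL⟩ := ContDiff.lipschitzWith_of_hasCompactSupport hsupp hu one_ne_zero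
  obtain ⟨x₀, hMx⟩ := (hu_cont.norm).exists_forall_ge_of_hasCompactSupport (hsupp.norm)
  set M : ℝ := ‖u x₀‖ with hMdef
  have hM' : ∀ z, |u z| ≤ M := fun z => by
    simpa [Real.norm_eq_abs] using hMx z
  set a : ℝ := (2:ℝ) ^ k * R with hadef
  have h2kpos : (0:ℝ) < (2:ℝ) ^ k := zpow_pos two_pos k
  have ha : 0 < a := by rw [hadef]; positivity
  have h2k1 : (2:ℝ) ^ (k+1) * R = 2 * a := by
    rw [hadef, zpow_add_one₀ (two_ne_zero)]; ring
  have hAk : A k = Metric.ball (0 : EuclideanSpace ℝ (Fin N)) (2*a) \ Metric.ball 0 a := by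
    rw [hA k]
    ext x
    simp only [mem_setOf_eq, mem_diff, mem_ball_zero_iff, not_lt, h2k1, ← hadef]
    exact ⟨fun h => ⟨h.2, h.1⟩, fun h => ⟨h.2, h.1⟩⟩
  have hmeasA : MeasurableSet (A k) := by
    rw [hAk]; exact measurableSet_ball.diff measurableSet_ball
  have hmem : ∀ x ∈ A k, a ≤ ‖x‖ ∧ ‖x‖ < 2*a := by
    intro x hx
    rw [hAk] at hx
    simp only [mem_diff, mem_ball_zero_iff, not_lt] at hx
    exact ⟨hx.2, hx.1⟩
  have hup : volume (A k) ≤ ENNReal.ofReal ((2*a)^N) * c := by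
    rw [hAk]
    exact le_trans (measure_mono diff_subset) (le_of_eq (hball _ (by positivity)))
  have hlow : ENNReal.ofReal (a^N) * c ≤ volume (A k) := by
    rw [hAk, measure_diff (Metric.ball_subset_ball (by linarith))
      measurableSet_ball.nullMeasurableSet measure_ball_lt_top.ne,
      hball _ (by positivity), hball _ ha.le]
    apply ENNReal.le_sub_of_add_le_left (ENNReal.mul_ne_top ENNReal.ofReal_ne_top hc_fin)
    rw [← add_mul, ← ENNReal.ofReal_add (by positivity) (by positivity)]
    apply mul_le_mul_left
    apply ENNReal.ofReal_le_ofReal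
    have h2N : (2:ℝ) ≤ 2 ^ N := by
      calc (2:ℝ) = 2^1 := (pow_one 2).symm
        _ ≤ 2^N := pow_le_pow_right₀ one_le_two hN
    calc a^N + a^N = 2 * a^N := by ring
      _ ≤ 2^N * a^N := by nlinarith [pow_pos ha N]
      _ = (2*a)^N := (mul_pow 2 a N).symm
  have hfin : volume (A k) ≠ ⊤ :=
    ne_top_of_le_ne_top (ENNReal.mul_ne_top ENNReal.ofReal_ne_top hc_fin) hup
  have hne0 : volume (A k) ≠ 0 := by
    have h0 : (0:ℝ≥0∞) < ENNReal.ofReal (a^N) * c :=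
      ENNReal.mul_pos (ENNReal.ofReal_pos.mpr (by positivity)).ne' hc_pos.ne'
    exact (lt_of_lt_of_le h0 hlow).ne'
  set mAr : ℝ := (volume (A k)).toReal with hmArdef
  have hmAr_pos : 0 < mAr := ENNReal.toReal_pos hne0 hfin
  have hmAr_up : mAr ≤ (2*a)^N * cB := by
    have h := ENNReal.toReal_mono (ENNReal.mul_ne_top ENNReal.ofReal_ne_top hc_fin) hup
    rwa [ENNReal.toReal_mul, ENNReal.toReal_ofReal (by positivity), ← hcBdef] at h
  have hmAr_low : a^N * cB ≤ mAr := by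
    have h := ENNReal.toReal_mono hfin hlow
    rwa [ENNReal.toReal_mul, ENNReal.toReal_ofReal (by positivity), ← hcBdef] at h
  set w : EuclideanSpace ℝ (Fin N) → EuclideanSpace ℝ (Fin N) → ℝ :=
    fun x y => ‖x‖ ^ α₁ * ‖y‖ ^ α₂ * (|u x - u y| / ‖x - y‖ ^ s) with hwdef
  have hwfold : ∀ x y : EuclideanSpace ℝ (Fin N),
      ‖x‖ ^ α₁ * ‖y‖ ^ α₂ * (|u x - u y| / ‖x - y‖ ^ s) = w x y := fun _ _ => rfl
  simp only [hwfold]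
  set avg : ℝ := ⨍ x in A k, u x with havgdef
  set t₀ : ℝ := (2:ℝ) ^ (-(k:ℝ) * γ) * |avg| with ht₀def
  have ht₀ : 0 ≤ t₀ := by rw [ht₀def]; positivity
  have hΦt₀ : 0 ≤ Φ t₀ := hΦ.nonneg_s13 ht₀
  have h2k : (2:ℝ) ^ (-(k:ℝ) * γ) = ((2:ℝ) ^ k) ^ (-γ) := by
    rw [← Real.rpow_intCast 2 k, ← Real.rpow_mul (by norm_num : (0:ℝ) ≤ 2)]
    congr 1; ring
  have hpow2N : (2:ℝ) ^ ((k:ℝ) * (N:ℝ)) = ((2:ℝ) ^ k) ^ N := by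
    rw [Real.rpow_mul (by norm_num : (0:ℝ) ≤ 2), Real.rpow_natCast, Real.rpow_intCast]
  have hu_int : IntegrableOn u (A k) :=
    (hu_cont.integrable_of_hasCompactSupport hsupp).integrableOn
  set Ψ : ℝ → ℝ := fun t => Φ (max t 0) with hΨdef
  have hΨc : Continuous Ψ :=
    hΦ.continuousOn.comp_continuous (continuous_id.max continuous_const)
      (fun t => mem_Ici.mpr (le_max_right _ _))
  have hΨeq : ∀ t : ℝ, 0 ≤ t → Ψ t = Φ t := fun t ht => by
    rw [hΨdef]; simp [max_eq_left ht]
  have hw_nonneg : ∀ x y, 0 ≤ w x y := fun x y =>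
    mul_nonneg (mul_nonneg (Real.rpow_nonneg (norm_nonneg _) _)
      (Real.rpow_nonneg (norm_nonneg _) _))
      (div_nonneg (abs_nonneg _) (Real.rpow_nonneg (norm_nonneg _) _))
  have hw_meas : ∀ x, Measurable (fun y => w x y) := by
    intro x
    apply Measurable.mul
    · exact measurable_const.mul ((measurable_rpow_const' α₂).comp measurable_norm)
    · exact ((continuous_const.sub hu_cont).abs.measurable).div
        ((measurable_rpow_const' s).comp
          ((continuous_const.sub continuous_id).norm.measurable))
  have hΦw_meas : ∀ x, Measurable (fun y => Φ (w x y)) := by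
    intro x
    have he : (fun y => Φ (w x y)) = fun y => Ψ (w x y) :=
      funext fun y => (hΨeq _ (hw_nonneg x y)).symm
    rw [he]
    exact hΨc.measurable.comp (hw_meas x)
  have hw_bdd : ∀ x ∈ A k, ∀ y ∈ A k, w x y ≤
      ‖x‖ ^ α₁ * ((a ^ α₂ * max 1 ((2:ℝ) ^ α₂)) * ((L:ℝ) * (4*a) ^ (1-s))) := by
    intro x hx y hy
    obtain ⟨hy1, hy2⟩ := hmem y hy
    obtain ⟨hx1, hx2⟩ := hmem x hx
    have hratio : |u x - u y| / ‖x - y‖ ^ s ≤ (L:ℝ) * (4*a) ^ (1-s) := by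
      by_cases hxy : x = y
      · subst hxy
        simp only [sub_self, abs_zero, zero_div]
        positivity
      · have hd : 0 < ‖x - y‖ := by rwa [norm_pos_iff, sub_ne_zero]
        have hd4 : ‖x - y‖ ≤ 4*a := by
          calc ‖x - y‖ ≤ ‖x‖ + ‖y‖ := norm_sub_le x y
            _ ≤ 4*a := by linarith
        have hnum : |u x - u y| ≤ (L:ℝ) * ‖x - y‖ := by
          have h := hL.dist_le_mul x y
          rwa [Real.dist_eq, dist_eq_norm] at h
        calc |u x - u y| / ‖x - y‖ ^ s ≤ ((L:ℝ) * ‖x - y‖) / ‖x - y‖ ^ s := by gcongr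
          _ = (L:ℝ) * ‖x - y‖ ^ (1-s) := by
            rw [Real.rpow_sub hd, Real.rpow_one, mul_div_assoc]
          _ ≤ (L:ℝ) * (4*a) ^ (1-s) :=
            mul_le_mul_of_nonneg_left
              (Real.rpow_le_rpow hd.le hd4 (by linarith [hs.2])) (L:ℝ≥0).coe_nonneg
    have hy' : ‖y‖ ^ α₂ ≤ a ^ α₂ * max 1 ((2:ℝ) ^ α₂) := rpow_mem_bound ha hy1 hy2.le
    have hw1 : w x y = ‖x‖ ^ α₁ * (‖y‖ ^ α₂ * (|u x - u y| / ‖x - y‖ ^ s)) := by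
      simp only [hwdef]
      ring
    rw [hw1]
    refine mul_le_mul_of_nonneg_left ?_ (Real.rpow_nonneg (norm_nonneg _) _)
    exact mul_le_mul hy' hratio
      (div_nonneg (abs_nonneg _) (Real.rpow_nonneg (norm_nonneg _) _))
      (by positivity)
  have hΦw_int : ∀ x ∈ A k, IntegrableOn (fun y => Φ (w x y)) (A k) := by
    intro x hx
    have hbd := hw_bdd x hx
    refine Integrable.mono'
      (integrableOn_const hfin : IntegrableOn
        (fun _ => Φ (‖x‖ ^ α₁ * ((a ^ α₂ * max 1 ((2:ℝ) ^ α₂)) * ((L:ℝ) * (4*a) ^ (1-s)))))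
        (A k) volume)
      ((hΦw_meas x).aestronglyMeasurable) ?_
    filter_upwards [ae_restrict_mem hmeasA] with y hy
    rw [Real.norm_eq_abs, abs_of_nonneg (hΦ.nonneg_s13 (hw_nonneg x y))]
    exact hΦ.mono_s13 (hw_nonneg x y) (hbd y hy)
  have hgw : ∀ x ∈ A k, ∀ y ∈ A k, Φ (|u x - u y| / ‖x‖ ^ γ) ≤ K₂ * Φ (w x y) := by
    intro x hx y hy
    obtain ⟨hx1, hx2⟩ := hmem x hx
    obtain ⟨hy1, hy2⟩ := hmem y hy
    have hxpos : 0 < ‖x‖ := lt_of_lt_of_le ha hx1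
    have hypos : 0 < ‖y‖ := lt_of_lt_of_le ha hy1
    by_cases hxy : |u x - u y| = 0
    · rw [hxy, zero_div, hΦ.map_zero]
      exact mul_nonneg hK₂pos.le (hΦ.nonneg_s13 (hw_nonneg x y))
    · have hne : x ≠ y := by
        intro h; apply hxy; rw [h, sub_self, abs_zero]
      have hd : 0 < ‖x - y‖ := by rwa [norm_pos_iff, sub_ne_zero]
      set lam : ℝ := ‖x - y‖ ^ s * (‖x‖ ^ (α₂ - s) * ‖y‖ ^ (-α₂)) with hlamdef
      have hlam0 : 0 ≤ lam := by
        rw [hlamdef]; positivity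
      have hid : |u x - u y| / ‖x‖ ^ γ = lam * w x y := by
        have e1 : ‖x‖ ^ (α₂ - s) * ‖x‖ ^ α₁ = ‖x‖ ^ (-γ) := by
          rw [← Real.rpow_add hxpos]; congr 1; rw [hγ]; ring
        have e2 : ‖y‖ ^ (-α₂) * ‖y‖ ^ α₂ = 1 := by
          rw [← Real.rpow_add hypos]; simp
        have e3 : ‖x - y‖ ^ s * (‖x - y‖ ^ s)⁻¹ = 1 :=
          mul_inv_cancel₀ (Real.rpow_pos_of_pos hd s).ne'
        have expand : lam * w x y = (‖x - y‖ ^ s * (‖x - y‖ ^ s)⁻¹) *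
            ((‖x‖ ^ (α₂ - s) * ‖x‖ ^ α₁) * ((‖y‖ ^ (-α₂) * ‖y‖ ^ α₂) * |u x - u y|)) := by
          simp only [hlamdef, hwdef, div_eq_mul_inv]
          ring
        rw [div_eq_mul_inv, ← Real.rpow_neg hxpos.le, expand, e1, e2, e3]
        ring
      have hb1 : ‖x - y‖ ^ s ≤ 4 ^ s * a ^ s := by
        have hd4 : ‖x - y‖ ≤ 4*a := by
          calc ‖x - y‖ ≤ ‖x‖ + ‖y‖ := norm_sub_le x y
            _ ≤ 4*a := by linarith
        calc ‖x - y‖ ^ s ≤ (4 * a) ^ s := Real.rpow_le_rpow (norm_nonneg _) hd4 hs.1.le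
          _ = 4 ^ s * a ^ s := Real.mul_rpow (by norm_num) ha.le
      have hb2 : ‖x‖ ^ (α₂ - s) ≤ a ^ (α₂ - s) * max 1 ((2:ℝ) ^ (α₂ - s)) :=
        rpow_mem_bound ha hx1 hx2.le
      have hb3 : ‖y‖ ^ (-α₂) ≤ a ^ (-α₂) * max 1 ((2:ℝ) ^ (-α₂)) :=
        rpow_mem_bound ha hy1 hy2.le
      have e0 : a ^ s * (a ^ (α₂ - s) * a ^ (-α₂)) = 1 := by
        rw [← Real.rpow_add ha, ← Real.rpow_add ha]
        have he : s + (α₂ - s + -α₂) = 0 := by ring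
        rw [he, Real.rpow_zero]
      have hlam_le : lam ≤ Λ₂ := by
        have step : lam ≤ (4 ^ s * a ^ s) *
            ((a ^ (α₂ - s) * max 1 ((2:ℝ) ^ (α₂ - s))) * (a ^ (-α₂) * max 1 ((2:ℝ) ^ (-α₂)))) := by
          rw [hlamdef]
          refine mul_le_mul hb1 ?_ ?_ (by positivity)
          · exact mul_le_mul hb2 hb3 (Real.rpow_nonneg (norm_nonneg _) _) (by positivity)
          · exact mul_nonneg (Real.rpow_nonneg (norm_nonneg _) _)
              (Real.rpow_nonneg (norm_nonneg _) _)
        refine step.trans (le_of_eq ?_)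
        rw [hΛ₂def]
        calc (4 ^ s * a ^ s) *
            ((a ^ (α₂ - s) * max 1 ((2:ℝ) ^ (α₂ - s))) * (a ^ (-α₂) * max 1 ((2:ℝ) ^ (-α₂))))
            = (4:ℝ) ^ s * (max 1 ((2:ℝ) ^ (α₂ - s)) * max 1 ((2:ℝ) ^ (-α₂))) *
              (a ^ s * (a ^ (α₂ - s) * a ^ (-α₂))) := by ring
          _ = (4:ℝ) ^ s * (max 1 ((2:ℝ) ^ (α₂ - s)) * max 1 ((2:ℝ) ^ (-α₂))) := by
              rw [e0, mul_one]
      rw [hid]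
      exact hΦ.scale_s13 hD1 hD m₂ hlam0 (hlam_le.trans hm₂.le) (hw_nonneg x y)
  have hG : ∀ x ∈ A k, ∀ y ∈ A k, Φ (w x y) ≤
      (4*a) ^ (N:ℝ) * (Φ (w x y) / ‖x - y‖ ^ (N:ℝ)) := by
    intro x hx y hy
    by_cases hxy : x = y
    · subst hxy
      have hw0 : w x x = 0 := by
        simp [hwdef, sub_self]
      rw [hw0, hΦ.map_zero]
      simp
    · have hd : 0 < ‖x - y‖ := by rwa [norm_pos_iff, sub_ne_zero]
      obtain ⟨-, hx2⟩ := hmem x hx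
      obtain ⟨-, hy2⟩ := hmem y hy
      have hd4 : ‖x - y‖ ≤ 4*a := by
        calc ‖x - y‖ ≤ ‖x‖ + ‖y‖ := norm_sub_le x y
          _ ≤ 4*a := by linarith
      have h1 : ‖x - y‖ ^ (N:ℝ) ≤ (4*a) ^ (N:ℝ) :=
        Real.rpow_le_rpow hd.le hd4 (Nat.cast_nonneg N)
      have h2 : Φ (w x y) / (4*a) ^ (N:ℝ) ≤ Φ (w x y) / ‖x - y‖ ^ (N:ℝ) :=
        div_le_div_of_nonneg_left (hΦ.nonneg_s13 (hw_nonneg x y)) (Real.rpow_pos_of_pos hd _) h1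
      have h4pos : (0:ℝ) < (4*a) ^ (N:ℝ) := Real.rpow_pos_of_pos (by linarith) _
      calc Φ (w x y) = (4*a) ^ (N:ℝ) * (Φ (w x y) / (4*a) ^ (N:ℝ)) := by field_simp
        _ ≤ (4*a) ^ (N:ℝ) * (Φ (w x y) / ‖x - y‖ ^ (N:ℝ)) :=
          mul_le_mul_of_nonneg_left h2 h4pos.le
  have key : ∀ x ∈ A k, Φ (|u x| / ‖x‖ ^ γ) ≤
      D * K₁ * Φ t₀ + (D * K₂ / mAr) * ∫ y in A k, Φ (w x y) := by
    intro x hx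
    obtain ⟨hx1, hx2⟩ := hmem x hx
    have hxpos : 0 < ‖x‖ := lt_of_lt_of_le ha hx1
    have hxγ : 0 < ‖x‖ ^ γ := Real.rpow_pos_of_pos hxpos γ
    have stepA : Φ (|u x| / ‖x‖ ^ γ) ≤
        D * (Φ (|avg| / ‖x‖ ^ γ) + Φ (|u x - avg| / ‖x‖ ^ γ)) := by
      have h1 : |u x| / ‖x‖ ^ γ ≤ |avg| / ‖x‖ ^ γ + |u x - avg| / ‖x‖ ^ γ := by
        rw [← add_div]
        have habs : |u x| ≤ |avg| + |u x - avg| := by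
          calc |u x| = |avg + (u x - avg)| := by ring_nf
            _ ≤ |avg| + |u x - avg| := abs_add_le _ _
        gcongr
      exact le_trans (hΦ.mono_s13 (by positivity) h1)
        (hΦ.add_le hD1 hD (by positivity) (by positivity))
    have stepB : Φ (|avg| / ‖x‖ ^ γ) ≤ K₁ * Φ t₀ := by
      set lam : ℝ := (‖x‖ * ((2:ℝ) ^ k)⁻¹) ^ (-γ) with hlamdef
      have hid : |avg| / ‖x‖ ^ γ = lam * t₀ := by
        have e1 : lam * ((2:ℝ) ^ k) ^ (-γ) = ‖x‖ ^ (-γ) := by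
          rw [hlamdef, ← Real.mul_rpow (by positivity) h2kpos.le]
          congr 1
          field_simp
        rw [ht₀def, h2k, ← mul_assoc, e1, Real.rpow_neg hxpos.le, div_eq_mul_inv, mul_comm]
      have hlam0 : 0 ≤ lam := Real.rpow_nonneg (by positivity) _
      have hm : R ≤ ‖x‖ * ((2:ℝ) ^ k)⁻¹ := by
        rw [hadef] at hx1
        have h := mul_le_mul_of_nonneg_right hx1 (inv_nonneg.mpr h2kpos.le)
        calc R = (2:ℝ) ^ k * R * ((2:ℝ) ^ k)⁻¹ := by field_simp
          _ ≤ ‖x‖ * ((2:ℝ) ^ k)⁻¹ := h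
      have hM2 : ‖x‖ * ((2:ℝ) ^ k)⁻¹ ≤ 2 * R := by
        have hx2' : ‖x‖ ≤ 2 * ((2:ℝ) ^ k * R) := by rw [← hadef]; exact hx2.le
        have h := mul_le_mul_of_nonneg_right hx2' (inv_nonneg.mpr h2kpos.le)
        calc ‖x‖ * ((2:ℝ) ^ k)⁻¹ ≤ 2 * ((2:ℝ) ^ k * R) * ((2:ℝ) ^ k)⁻¹ := h
          _ = 2 * R := by field_simp
      have hlam_le : lam ≤ Λ₁ := by
        rw [hlamdef, hΛ₁def]
        exact rpow_mem_bound hR hm hM2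
      rw [hid]
      exact hΦ.scale_s13 hD1 hD m₁ hlam0 (hlam_le.trans hm₁.le) ht₀
    have g_int : IntegrableOn (fun y => |u x - u y| / ‖x‖ ^ γ) (A k) :=
      (((integrableOn_const hfin).sub hu_int).abs).div_const _
    have Φg_int : IntegrableOn (fun y => Φ (|u x - u y| / ‖x‖ ^ γ)) (A k) := by
      have hgc : Continuous (fun y => |u x - u y| / ‖x‖ ^ γ) :=
        ((continuous_const.sub hu_cont).abs).div_const _
      have heq : (fun y => Φ (|u x - u y| / ‖x‖ ^ γ)) =
          fun y => Ψ (|u x - u y| / ‖x‖ ^ γ) :=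
        funext fun y => (hΨeq _ (by positivity)).symm
      rw [heq]
      refine Integrable.mono'
        (integrableOn_const hfin : IntegrableOn
          (fun _ => Φ (2 * M / ‖x‖ ^ γ)) (A k) volume)
        ((hΨc.comp hgc).aestronglyMeasurable) (ae_of_all _ fun y => ?_)
      rw [hΨeq _ (by positivity), Real.norm_eq_abs, abs_of_nonneg (hΦ.nonneg_s13 (by positivity))]
      refine hΦ.mono_s13 (by positivity) ?_
      have habs : |u x - u y| ≤ 2 * M := by
        calc |u x - u y| = ‖u x - u y‖ := (Real.norm_eq_abs _).symm
          _ ≤ ‖u x‖ + ‖u y‖ := norm_sub_le _ _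
          _ ≤ 2 * M := by
            have h1 := hM' x; have h2 := hM' y
            rw [Real.norm_eq_abs, Real.norm_eq_abs]
            linarith
      gcongr
    have havg2 : (⨍ y in A k, (u x - u y)) = u x - avg := by
      rw [havgdef, setAverage_eq, setAverage_eq,
        integral_sub (integrableOn_const (C := u x) hfin) hu_int, setIntegral_const]
      rw [measureReal_def, ← hmArdef]
      simp only [smul_eq_mul, smul_sub]
      field_simp
    have c2 : |u x - avg| ≤ mAr⁻¹ * ∫ y in A k, |u x - u y| := by
      rw [← havg2, setAverage_eq, measureReal_def, ← hmArdef, smul_eq_mul, abs_mul, abs_inv,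
        abs_of_pos hmAr_pos]
      refine mul_le_mul_of_nonneg_left ?_ (inv_nonneg.mpr hmAr_pos.le)
      simpa [Real.norm_eq_abs] using
        norm_integral_le_integral_norm (μ := volume.restrict (A k)) (fun y => u x - u y)
    have c3 : |u x - avg| / ‖x‖ ^ γ ≤ ⨍ y in A k, (|u x - u y| / ‖x‖ ^ γ) := by
      rw [setAverage_eq, measureReal_def, ← hmArdef, smul_eq_mul, integral_div, ← mul_div_assoc]
      gcongr
    have jensen : Φ (⨍ y in A k, (|u x - u y| / ‖x‖ ^ γ)) ≤
        ⨍ y in A k, Φ (|u x - u y| / ‖x‖ ^ γ) := by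
      refine hΦ.convexOn.map_set_average_le hΦ.continuousOn isClosed_Ici hne0 hfin
        (ae_of_all _ fun y => mem_Ici.mpr (by positivity)) g_int ?_
      exact Φg_int
    have c5 : Φ (|u x - avg| / ‖x‖ ^ γ) ≤ ⨍ y in A k, Φ (|u x - u y| / ‖x‖ ^ γ) :=
      le_trans (hΦ.mono_s13 (by positivity) c3) jensen
    have c8 : (∫ y in A k, Φ (|u x - u y| / ‖x‖ ^ γ)) ≤ ∫ y in A k, K₂ * Φ (w x y) :=
      setIntegral_mono_on Φg_int ((hΦw_int x hx).const_mul K₂) hmeasA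
        (fun y hy => hgw x hx y hy)
    have c9 : (⨍ y in A k, Φ (|u x - u y| / ‖x‖ ^ γ)) ≤
        (K₂ / mAr) * ∫ y in A k, Φ (w x y) := by
      rw [setAverage_eq, measureReal_def, ← hmArdef, smul_eq_mul]
      calc mAr⁻¹ * ∫ y in A k, Φ (|u x - u y| / ‖x‖ ^ γ)
          ≤ mAr⁻¹ * ∫ y in A k, K₂ * Φ (w x y) :=
            mul_le_mul_of_nonneg_left c8 (inv_nonneg.mpr hmAr_pos.le)
        _ = (K₂ / mAr) * ∫ y in A k, Φ (w x y) := by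
            rw [integral_const_mul]
            ring
    calc Φ (|u x| / ‖x‖ ^ γ)
        ≤ D * (Φ (|avg| / ‖x‖ ^ γ) + Φ (|u x - avg| / ‖x‖ ^ γ)) := stepA
      _ ≤ D * (K₁ * Φ t₀ + (K₂ / mAr) * ∫ y in A k, Φ (w x y)) :=
          mul_le_mul_of_nonneg_left (add_le_add stepB (c5.trans c9)) hDpos.le
      _ = D * K₁ * Φ t₀ + (D * K₂ / mAr) * ∫ y in A k, Φ (w x y) := by ring
  have main : ∀ᵐ x ∂(volume.restrict (A k)),
      ENNReal.ofReal (Φ (|u x| / ‖x‖ ^ γ)) ≤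
        ENNReal.ofReal (D * K₁ * Φ t₀) +
          ENNReal.ofReal C * ∫⁻ y in A k, ENNReal.ofReal (Φ (w x y) / ‖x - y‖ ^ (N:ℝ)) := by
    filter_upwards [ae_restrict_mem hmeasA] with x hx
    have h4aN : ((4*a) ^ (N:ℝ)) = 4^N * a^N := by
      rw [Real.rpow_natCast, mul_pow]
    have hwint := hΦw_int x hx
    have hconst : (D * K₂ / mAr) * (4*a) ^ (N:ℝ) ≤ C := by
      rw [h4aN]
      have h1 : D * K₂ / mAr ≤ D * K₂ / (a^N * cB) := by
        apply div_le_div_of_nonneg_left (by positivity) ?_ hmAr_low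
        have hp := pow_pos ha N
        positivity
      calc (D*K₂/mAr) * (4^N*a^N) ≤ (D*K₂/(a^N*cB)) * (4^N*a^N) := by
            have h4p : (0:ℝ) < 4^N * a^N := by positivity
            exact mul_le_mul_of_nonneg_right h1 h4p.le
        _ = D * K₂ * 4^N / cB := by
            field_simp
        _ ≤ C := by rw [hCdef]; exact le_max_right _ _
    calc ENNReal.ofReal (Φ (|u x| / ‖x‖ ^ γ))
        ≤ ENNReal.ofReal (D * K₁ * Φ t₀ + (D * K₂ / mAr) * ∫ y in A k, Φ (w x y)) :=
          ENNReal.ofReal_le_ofReal (key x hx)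
      _ ≤ ENNReal.ofReal (D * K₁ * Φ t₀) +
          ENNReal.ofReal ((D * K₂ / mAr) * ∫ y in A k, Φ (w x y)) :=
          ENNReal.ofReal_add_le
      _ ≤ _ := by
          refine add_le_add_right ?_ _
          rw [ENNReal.ofReal_mul (by positivity : (0:ℝ) ≤ D * K₂ / mAr),
            ofReal_integral_eq_lintegral_ofReal hwint
              (ae_of_all _ fun y => hΦ.nonneg_s13 (hw_nonneg x y))]
          calc ENNReal.ofReal (D*K₂/mAr) * ∫⁻ y in A k, ENNReal.ofReal (Φ (w x y))
              ≤ ENNReal.ofReal (D*K₂/mAr) * ∫⁻ y in A k,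
                  (ENNReal.ofReal ((4*a) ^ (N:ℝ)) *
                    ENNReal.ofReal (Φ (w x y) / ‖x - y‖ ^ (N:ℝ))) := by
                refine mul_le_mul_right (lintegral_mono_ae
                  ((ae_restrict_iff' hmeasA).2 (ae_of_all _ fun y hy => ?_))) _
                rw [← ENNReal.ofReal_mul (Real.rpow_nonneg (by linarith) _)]
                exact ENNReal.ofReal_le_ofReal (hG x hx y hy)
            _ = (ENNReal.ofReal (D*K₂/mAr) * ENNReal.ofReal ((4*a) ^ (N:ℝ))) *
                  ∫⁻ y in A k, ENNReal.ofReal (Φ (w x y) / ‖x - y‖ ^ (N:ℝ)) := by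
                rw [lintegral_const_mul' _ _ ENNReal.ofReal_ne_top, mul_assoc]
            _ ≤ ENNReal.ofReal C *
                  ∫⁻ y in A k, ENNReal.ofReal (Φ (w x y) / ‖x - y‖ ^ (N:ℝ)) := by
                refine mul_le_mul_left ?_ _
                rw [← ENNReal.ofReal_mul (by positivity)]
                exact ENNReal.ofReal_le_ofReal hconst
  calc (∫⁻ x in A k, ENNReal.ofReal (Φ (|u x| / ‖x‖ ^ γ)))
      ≤ ∫⁻ x in A k, (ENNReal.ofReal (D * K₁ * Φ t₀) +
          ENNReal.ofReal C * ∫⁻ y in A k, ENNReal.ofReal (Φ (w x y) / ‖x - y‖ ^ (N:ℝ))) :=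
        lintegral_mono_ae main
    _ = ENNReal.ofReal (D * K₁ * Φ t₀) * volume (A k) +
        ENNReal.ofReal C * ∫⁻ x in A k, ∫⁻ y in A k,
          ENNReal.ofReal (Φ (w x y) / ‖x - y‖ ^ (N:ℝ)) := by
        rw [lintegral_add_left measurable_const, setLIntegral_const,
          lintegral_const_mul' _ _ ENNReal.ofReal_ne_top]
    _ ≤ ENNReal.ofReal (C * (2:ℝ) ^ ((k:ℝ) * N) * Φ t₀) +
        ENNReal.ofReal C * ∫⁻ x in A k, ∫⁻ y in A k,
          ENNReal.ofReal (Φ (w x y) / ‖x - y‖ ^ (N:ℝ)) := by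
        refine add_le_add_left ?_ _
        calc ENNReal.ofReal (D*K₁*Φ t₀) * volume (A k)
            ≤ ENNReal.ofReal (D*K₁*Φ t₀) * (ENNReal.ofReal ((2*a)^N) * c) :=
              mul_le_mul_right hup _
          _ = ENNReal.ofReal (D*K₁*Φ t₀) * ENNReal.ofReal ((2*a)^N * cB) := by
              congr 1
              rw [hcBdef, ENNReal.ofReal_mul (by positivity : (0:ℝ) ≤ (2*a)^N),
                ENNReal.ofReal_toReal hc_fin]
          _ = ENNReal.ofReal (D*K₁*Φ t₀ * ((2*a)^N * cB)) := by
              rw [← ENNReal.ofReal_mul (mul_nonneg (mul_nonneg hDpos.le hK₁pos.le) hΦt₀)]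
          _ ≤ ENNReal.ofReal (C * (2:ℝ) ^ ((k:ℝ)*N) * Φ t₀) := by
              apply ENNReal.ofReal_le_ofReal
              have e : (2*a)^N = 2^N * (((2:ℝ)^k)^N * R^N) := by
                rw [hadef, mul_pow, mul_pow]
              rw [hpow2N, e]
              have h1 : D*K₁*2^N*R^N*cB ≤ C := by rw [hCdef]; exact le_max_left _ _
              have hz : (0:ℝ) ≤ ((2:ℝ)^k)^N := by positivity
              calc D*K₁*Φ t₀*((2^N*(((2:ℝ)^k)^N * R^N))*cB)
                  = (D*K₁*2^N*R^N*cB) * (((2:ℝ)^k)^N) * Φ t₀ := by ring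
                _ ≤ C * (((2:ℝ)^k)^N) * Φ t₀ :=
                    mul_le_mul_of_nonneg_right (mul_le_mul_of_nonneg_right h1 hz) hΦt₀
end

section
/- Let N ≥ 1, s ∈ (0,1), R > 0, α₁, α₂ ∈ ℝ, γ = s − α₁ − α₂, and Φ an Orlicz function. Let A_k = {x ∈ ℝ^N : 2^k R ≤ |x| < 2^{k+1}R}. Then there exists C = C(s,α₁,α₂,N,R,Φ) > 0 such that for every u ∈ C_c¹(ℝ^N) and k ∈ ℤ: Φ(2^{−kγ}|(u)_{A_k} − (u)_{A_{k+1}}|) ≤ C·2^{−kN} ∫_{A_k∪A_{k+1}}∫_{A_k∪A_{k+1}} Φ(|x|^{α₁}|y|^{α₂}|D_s u(x,y)|) dμ. -/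
open Set Filter MeasureTheory

namespace OrliczAux

variable {Φ : ℝ → ℝ}

lemma chord (hΦ : IsOrlicz Φ) {a b : ℝ} (ha : 0 ≤ a) (hab : a ≤ b) (hb : 0 < b) :
    Φ a ≤ a / b * Φ b := by
  have h := hΦ.convexOn.2 (self_mem_Ici (a := (0:ℝ))) (mem_Ici.mpr hb.le)
      (sub_nonneg.mpr ((div_le_one hb).mpr hab)) (div_nonneg ha hb.le)
      (by ring)
  rw [smul_eq_mul, smul_eq_mul, smul_eq_mul, mul_zero, zero_add,
    div_mul_cancel₀ a hb.ne', hΦ.map_zero, mul_zero, zero_add] at h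
  exact h

lemma nonneg (hΦ : IsOrlicz Φ) {t : ℝ} (ht : 0 ≤ t) : 0 ≤ Φ t := by
  rcases ht.eq_or_lt with h | h
  · rw [← h, hΦ.map_zero]
  by_contra hneg
  push_neg at hneg
  have hε : 0 < -(Φ t / t) := by
    have : Φ t / t < 0 := div_neg_of_neg_of_pos hneg h
    linarith
  have h1 : ∀ᶠ x in nhdsWithin 0 (Ioi 0), dist (Φ x / x) 0 < -(Φ t / t) :=
    Metric.tendsto_nhds.mp hΦ.tendsto_zero _ hε
  have h2 : ∀ᶠ x in nhdsWithin (0:ℝ) (Ioi 0), x ∈ Ioo (0:ℝ) t :=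
    eventually_of_mem (Ioo_mem_nhdsGT_of_mem ⟨le_refl 0, h⟩) fun x hx => hx
  obtain ⟨x, hx1, hx2⟩ := (h1.and h2).exists
  have hx0 : 0 < x := hx2.1
  have hcb : Φ x ≤ x / t * Φ t := chord hΦ hx0.le hx2.2.le h
  have hmul : x / t * Φ t * t = x * Φ t := by field_simp
  have h3 : Φ x / x ≤ Φ t / t := by
    rw [div_le_div_iff₀ hx0 h]
    have := mul_le_mul_of_nonneg_right hcb h.le
    rw [hmul] at this
    linarith
  rw [Real.dist_eq, sub_zero, abs_lt] at hx1
  linarith [hx1.1]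

lemma mono (hΦ : IsOrlicz Φ) {a b : ℝ} (ha : 0 ≤ a) (hab : a ≤ b) : Φ a ≤ Φ b := by
  rcases (ha.trans hab).eq_or_lt with h | hb
  · have ha0 : a = 0 := le_antisymm (h ▸ hab) ha
    rw [ha0, ← h]
  · calc Φ a ≤ a / b * Φ b := chord hΦ ha hab hb
      _ ≤ 1 * Φ b := mul_le_mul_of_nonneg_right ((div_le_one hb).mpr hab)
          (nonneg hΦ (ha.trans hab))
      _ = Φ b := one_mul _

lemma scale (hΦ : IsOrlicz Φ) {M : ℝ} (hM : 0 ≤ M) :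
    ∃ K > 0, ∀ t, 0 ≤ t → Φ (M * t) ≤ K * Φ t := by
  obtain ⟨C, hC, hCle⟩ := hΦ.delta2
  set C' : ℝ := max C 1 with hC'
  have hC'1 : (1:ℝ) ≤ C' := le_max_right _ _
  have hC'0 : (0:ℝ) < C' := lt_of_lt_of_le one_pos hC'1
  have h2 : ∀ t, 0 ≤ t → Φ (2 * t) ≤ C' * Φ t := fun t ht =>
    (hCle t ht).trans (mul_le_mul_of_nonneg_right (le_max_left _ _) (nonneg hΦ ht))
  have hiter : ∀ n : ℕ, ∀ t, 0 ≤ t → Φ (2 ^ n * t) ≤ C' ^ n * Φ t := by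
    intro n
    induction n with
    | zero => intro t ht; simp
    | succ n ih =>
      intro t ht
      have e : (2:ℝ) ^ (n + 1) * t = 2 ^ n * (2 * t) := by ring
      rw [e]
      calc Φ (2 ^ n * (2 * t)) ≤ C' ^ n * Φ (2 * t) := ih _ (by positivity)
        _ ≤ C' ^ n * (C' * Φ t) :=
            mul_le_mul_of_nonneg_left (h2 t ht) (by positivity)
        _ = C' ^ (n + 1) * Φ t := by ring
  obtain ⟨n, hn⟩ := pow_unbounded_of_one_lt M (one_lt_two (α := ℝ))
  refine ⟨C' ^ n, pow_pos hC'0 n, fun t ht => ?_⟩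
  calc Φ (M * t) ≤ Φ (2 ^ n * t) :=
        mono hΦ (by positivity) (mul_le_mul_of_nonneg_right hn.le ht)
    _ ≤ C' ^ n * Φ t := hiter n t ht

end OrliczAux

lemma meas_rpow_const (α : ℝ) : Measurable (fun x : ℝ => x ^ α) :=
  measurable_of_continuousOn_compl_singleton 0 fun x hx =>
    (Real.continuousAt_rpow_const x α (Or.inl hx)).continuousWithinAt

lemma rpow_bounds {lo hi t α : ℝ} (hlo : 0 < lo) (h1 : lo ≤ t) (h2 : t ≤ hi) :
    min (lo ^ α) (hi ^ α) ≤ t ^ α ∧ t ^ α ≤ max (lo ^ α) (hi ^ α) := by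
  have ht : 0 < t := lt_of_lt_of_le hlo h1
  rcases le_or_gt 0 α with hα | hα
  · exact ⟨(min_le_left _ _).trans (Real.rpow_le_rpow hlo.le h1 hα),
      (Real.rpow_le_rpow ht.le h2 hα).trans (le_max_right _ _)⟩
  · exact ⟨(min_le_right _ _).trans (Real.rpow_le_rpow_of_nonpos ht h2 hα.le),
      (Real.rpow_le_rpow_of_nonpos hlo h1 hα.le).trans (le_max_left _ _)⟩

lemma rpow_scaled_lower {q t lo hi α : ℝ} (hq : 0 < q) (hlo : 0 < lo)
    (h1 : q * lo ≤ t) (h2 : t ≤ q * hi) :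
    q ^ α * min (lo ^ α) (hi ^ α) ≤ t ^ α := by
  have ht : 0 < t := lt_of_lt_of_le (by positivity) h1
  have hqt : q * (t / q) = t := by field_simp
  have key : t ^ α = q ^ α * (t / q) ^ α := by
    rw [← Real.mul_rpow hq.le (by positivity), hqt]
  rw [key]
  refine mul_le_mul_of_nonneg_left ?_ (Real.rpow_nonneg hq.le α)
  exact (rpow_bounds hlo ((le_div_iff₀ hq).mpr (by linarith))
    ((div_le_iff₀ hq).mpr (by linarith))).1

set_option maxHeartbeats 1000000 in
/-- Annular estimate (ii): the Orlicz value of the difference of averages of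
`u` over consecutive dyadic annuli is controlled by the weighted fractional
seminorm over the union of the two annuli. -/
theorem annulus_estimate_two
    (N : ℕ) (hN : 1 ≤ N) (s α₁ α₂ R : ℝ) (hs : s ∈ Ioo (0:ℝ) 1) (hR : 0 < R)
    (Φ : ℝ → ℝ) (hΦ : IsOrlicz Φ) (γ : ℝ) (hγ : γ = s - α₁ - α₂)
    (A : ℤ → Set (EuclideanSpace ℝ (Fin N)))
    (hA : ∀ k, A k = {x | (2:ℝ) ^ k * R ≤ ‖x‖ ∧ ‖x‖ < (2:ℝ) ^ (k + 1) * R}) :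
    ∃ C > 0, ∀ u : EuclideanSpace ℝ (Fin N) → ℝ,
      ContDiff ℝ 1 u → HasCompactSupport u → ∀ k : ℤ,
      ENNReal.ofReal
          (Φ ((2:ℝ) ^ (-(k:ℝ) * γ) *
            |(⨍ x in A k, u x) - ⨍ x in A (k + 1), u x|)) ≤
        ENNReal.ofReal (C * (2:ℝ) ^ (-(k:ℝ) * N)) *
          ∫⁻ x in A k ∪ A (k + 1), ∫⁻ y in A k ∪ A (k + 1), ENNReal.ofReal
            (Φ (‖x‖ ^ α₁ * ‖y‖ ^ α₂ * (|u x - u y| / ‖x - y‖ ^ s)) /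
              ‖x - y‖ ^ (N:ℝ)) := by
  classical
  obtain ⟨hs0, hs1⟩ := hs
  have hp : ∀ k : ℤ, (0:ℝ) < 2 ^ k := fun k => zpow_pos (by norm_num) k
  set r : ℤ → ℝ := fun k => 2 ^ k * R with hrdef
  have hrval : ∀ j : ℤ, r j = 2 ^ j * R := fun j => rfl
  have hrpos : ∀ j, 0 < r j := fun j => mul_pos (hp j) hR
  have hr2 : ∀ j, r (j + 1) = 2 * r j := by
    intro j
    rw [hrval, hrval, zpow_add_one₀ (two_ne_zero)]
    ring
  have hAball : ∀ k, A k =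
      Metric.ball (0:EuclideanSpace ℝ (Fin N)) (r (k+1)) \ Metric.ball 0 (r k) := by
    intro k
    rw [hA k]
    ext x
    simp only [mem_diff, Metric.mem_ball, dist_zero_right, mem_setOf_eq, not_lt, hrval]
    tauto
  have hAmeas : ∀ k, MeasurableSet (A k) := fun k => by
    rw [hAball k]; exact measurableSet_ball.diff measurableSet_ball
  have hmem : ∀ k x, x ∈ A k → r k ≤ ‖x‖ ∧ ‖x‖ < r (k+1) := by
    intro k x hx; rw [hA k] at hx; exact hx
  haveI : Nonempty (Fin N) := ⟨⟨0, hN⟩⟩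
  set ι : ENNReal := volume (Metric.ball (0:EuclideanSpace ℝ (Fin N)) 1) with hι
  have hι0 : ι ≠ 0 := (Metric.measure_ball_pos _ _ one_pos).ne'
  have hιtop : ι ≠ ⊤ := measure_ball_lt_top.ne
  have hball : ∀ t : ℝ, 0 ≤ t → volume (Metric.ball (0:EuclideanSpace ℝ (Fin N)) t)
      = ENNReal.ofReal (t ^ N) * ι := by
    intro t ht
    rw [Measure.addHaar_ball _ _ ht, finrank_euclideanSpace_fin]
  have hvolA : ∀ k, volume (A k) = ENNReal.ofReal (r (k+1) ^ N - r k ^ N) * ι := by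
    intro k
    rw [hAball k, measure_diff (Metric.ball_subset_ball (by nlinarith [hr2 k, hrpos k]))
      measurableSet_ball.nullMeasurableSet measure_ball_lt_top.ne,
      hball _ (hrpos _).le, hball _ (hrpos _).le,
      ← ENNReal.sub_mul (fun _ _ => hιtop), ← ENNReal.ofReal_sub _ (by positivity)]
  set W : ℝ := ((2:ℝ) ^ N - 1) * ι.toReal with hW
  have hιr : 0 < ι.toReal := ENNReal.toReal_pos hι0 hιtop
  have h2N : (1:ℝ) < 2 ^ N := one_lt_pow₀ (by norm_num) (by omega)
  have hWpos : 0 < W := mul_pos (by linarith) hιr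
  have hdiffpos : ∀ k, 0 < r (k+1) ^ N - r k ^ N := by
    intro k
    have : r (k+1) ^ N = 2 ^ N * r k ^ N := by rw [hr2, mul_pow]
    nlinarith [pow_pos (hrpos k) N]
  have hvolAr : ∀ k, (volume (A k)).toReal = r k ^ N * W := by
    intro k
    rw [hvolA k, ENNReal.toReal_mul, ENNReal.toReal_ofReal (hdiffpos k).le]
    have : r (k+1) ^ N = 2 ^ N * r k ^ N := by rw [hr2, mul_pow]
    rw [hW, this]
    ring
  have hvolA0 : ∀ k, volume (A k) ≠ 0 := by
    intro k
    rw [hvolA k]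
    exact mul_ne_zero (ENNReal.ofReal_pos.mpr (hdiffpos k)).ne' hι0
  have hvolAfin : ∀ k, volume (A k) ≠ ⊤ := by
    intro k
    rw [hvolA k]
    exact ENNReal.mul_ne_top ENNReal.ofReal_ne_top hιtop
  -- uniform constants
  set c₁ : ℝ := min (R ^ α₁) ((4 * R) ^ α₁) with hc₁
  set c₂ : ℝ := min ((2 * R) ^ α₂) ((4 * R) ^ α₂) with hc₂
  have hc₁0 : 0 < c₁ :=
    lt_min (Real.rpow_pos_of_pos hR _) (Real.rpow_pos_of_pos (by linarith) _)
  have hc₂0 : 0 < c₂ :=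
    lt_min (Real.rpow_pos_of_pos (by linarith) _) (Real.rpow_pos_of_pos (by linarith) _)
  set M : ℝ := (8 * R) ^ s / (c₁ * c₂) with hM
  have hM0 : 0 ≤ M :=
    le_of_lt (div_pos (Real.rpow_pos_of_pos (by linarith) _) (mul_pos hc₁0 hc₂0))
  obtain ⟨K, hK0, hKle⟩ := OrliczAux.scale hΦ hM0
  set V : ℝ := R ^ N * W with hV
  have hV0 : 0 < V := mul_pos (pow_pos hR N) hWpos
  refine ⟨K * (8 * R) ^ N / (2 ^ N * V ^ 2), by positivity, ?_⟩
  intro u hu hsupp k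
  obtain ⟨L, hL⟩ := ContDiff.lipschitzWith_of_hasCompactSupport hsupp hu one_ne_zero
  obtain ⟨Mu, hMu⟩ := hu.continuous.bounded_above_of_compact_support hsupp
  have hMu0 : 0 ≤ Mu := le_trans (norm_nonneg _) (hMu 0)
  have hLip : ∀ x y : EuclideanSpace ℝ (Fin N), |u x - u y| ≤ (L:ℝ) * ‖x - y‖ := by
    intro x y
    have := hL.dist_le_mul x y
    rwa [Real.dist_eq, dist_eq_norm] at this
  have hq0 : (0:ℝ) < 2 ^ k := hp k
  have hrk : r k = 2 ^ k * R := hrval k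
  have hrk1 : r (k + 1) = 2 * 2 ^ k * R := by rw [hr2, hrk]; ring
  have hrk2 : r (k + 1 + 1) = 4 * 2 ^ k * R := by rw [hr2, hrk1]; ring
  set S := A k with hS
  set T := A (k + 1) with hT
  set P := S ×ˢ T with hP
  set π : Measure (EuclideanSpace ℝ (Fin N) × EuclideanSpace ℝ (Fin N)) :=
    (volume : Measure (EuclideanSpace ℝ (Fin N))).prod volume with hπ
  have hPmeas : MeasurableSet P := (hAmeas k).prod (hAmeas (k + 1))
  have hπP : π P = volume S * volume T := Measure.prod_prod S T
  have hS0 : volume S ≠ 0 := hvolA0 k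
  have hT0 : volume T ≠ 0 := hvolA0 (k + 1)
  have hSfin : volume S ≠ ⊤ := hvolAfin k
  have hTfin : volume T ≠ ⊤ := hvolAfin (k + 1)
  have hπP0 : π P ≠ 0 := by rw [hπP]; exact mul_ne_zero hS0 hT0
  have hπPfin : π P ≠ ⊤ := by rw [hπP]; exact ENNReal.mul_ne_top hSfin hTfin
  set mS : ℝ := (volume S).toReal with hmS
  set mT : ℝ := (volume T).toReal with hmT
  have hmS0 : 0 < mS := ENNReal.toReal_pos hS0 hSfin
  have hmT0 : 0 < mT := ENNReal.toReal_pos hT0 hTfin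
  have hπPr : (π P).toReal = mS * mT := by rw [hπP, ENNReal.toReal_mul]
  have hres : π.restrict P = (volume.restrict S).prod (volume.restrict T) := by
    rw [hπ, hP]; exact (Measure.prod_restrict S T).symm
  haveI hfinres : IsFiniteMeasure (π.restrict P) := by
    constructor
    rw [Measure.restrict_apply_univ]
    exact hπPfin.lt_top
  -- functions
  set g : EuclideanSpace ℝ (Fin N) × EuclideanSpace ℝ (Fin N) → ℝ :=
    fun p => u p.1 - u p.2 with hgdef
  set w : EuclideanSpace ℝ (Fin N) × EuclideanSpace ℝ (Fin N) → ℝ :=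
    fun p => ‖p.1‖ ^ α₁ * ‖p.2‖ ^ α₂ * (|u p.1 - u p.2| / ‖p.1 - p.2‖ ^ s) with hwdef
  set f : EuclideanSpace ℝ (Fin N) × EuclideanSpace ℝ (Fin N) → ℝ :=
    fun p => ((2:ℝ) ^ k) ^ (-γ) * |g p| with hfdef
  have hu_m : Measurable u := hu.continuous.measurable
  have hg_m : Measurable g := (hu_m.comp measurable_fst).sub (hu_m.comp measurable_snd)
  have hf_m : Measurable f := measurable_const.mul hg_m.abs
  have hnorm_m : Measurable (fun p : EuclideanSpace ℝ (Fin N) × EuclideanSpace ℝ (Fin N) =>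
      ‖p.1 - p.2‖) := (measurable_fst.sub measurable_snd).norm
  have hw_m : Measurable w :=
    (((meas_rpow_const α₁).comp measurable_fst.norm).mul
      ((meas_rpow_const α₂).comp measurable_snd.norm)).mul
      (hg_m.abs.div ((meas_rpow_const s).comp hnorm_m))
  set Ψ : ℝ → ℝ := fun t => Φ (max t 0) with hΨdef
  have hΨc : Continuous Ψ :=
    hΦ.continuousOn.comp_continuous (continuous_id.max continuous_const)
      fun t => mem_Ici.mpr (le_max_right _ _)
  have hΨeq : ∀ t : ℝ, 0 ≤ t → Ψ t = Φ t := by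
    intro t ht
    simp only [hΨdef, max_eq_left ht]
  have hΨnn : ∀ t : ℝ, 0 ≤ Ψ t := fun t => OrliczAux.nonneg hΦ (le_max_right _ _)
  have hf_nn : ∀ p, 0 ≤ f p := by
    intro p
    simp only [hfdef]
    exact mul_nonneg (Real.rpow_nonneg hq0.le _) (abs_nonneg _)
  have hw_nn : ∀ p, 0 ≤ w p := by
    intro p
    simp only [hwdef]
    exact mul_nonneg (mul_nonneg (Real.rpow_nonneg (norm_nonneg _) _)
      (Real.rpow_nonneg (norm_nonneg _) _))
      (div_nonneg (abs_nonneg _) (Real.rpow_nonneg (norm_nonneg _) _))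
  -- integrability helper
  have hInt : ∀ h : EuclideanSpace ℝ (Fin N) × EuclideanSpace ℝ (Fin N) → ℝ,
      Measurable h → ∀ Cb : ℝ, (∀ p ∈ P, |h p| ≤ Cb) → IntegrableOn h P π := by
    intro h hm Cb hb
    refine Integrable.mono' (integrable_const Cb) hm.aestronglyMeasurable ?_
    refine (ae_restrict_iff' hPmeas).mpr (ae_of_all _ ?_)
    intro p hp
    simpa [Real.norm_eq_abs] using hb p hp
  have hgb : ∀ p : EuclideanSpace ℝ (Fin N) × EuclideanSpace ℝ (Fin N), |g p| ≤ 2 * Mu := by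
    intro p
    simp only [hgdef]
    calc |u p.1 - u p.2| ≤ |u p.1| + |u p.2| := abs_sub _ _
      _ ≤ Mu + Mu := add_le_add (Real.norm_eq_abs (u p.1) ▸ hMu p.1)
          (Real.norm_eq_abs (u p.2) ▸ hMu p.2)
      _ = 2 * Mu := by ring
  -- geometry on P
  have hgeo : ∀ p : EuclideanSpace ℝ (Fin N) × EuclideanSpace ℝ (Fin N), p ∈ P →
      2 ^ k * R ≤ ‖p.1‖ ∧ ‖p.1‖ ≤ 2 ^ k * (4 * R) ∧
      2 ^ k * (2 * R) ≤ ‖p.2‖ ∧ ‖p.2‖ ≤ 2 ^ k * (4 * R) ∧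
      0 < ‖p.1 - p.2‖ ∧ ‖p.1 - p.2‖ ≤ 8 * 2 ^ k * R := by
    intro p hp
    rw [hP] at hp
    obtain ⟨h1, h2⟩ := hp
    obtain ⟨hx1, hx2⟩ := hmem k _ (hS ▸ h1)
    obtain ⟨hy1, hy2⟩ := hmem (k + 1) _ (hT ▸ h2)
    rw [hrk] at hx1
    rw [hrk1] at hx2 hy1
    rw [hrk2] at hy2
    refine ⟨hx1, by linarith, by linarith, by linarith, ?_, ?_⟩
    · rw [norm_sub_pos_iff]
      intro h
      rw [h] at hx2
      linarith
    · calc ‖p.1 - p.2‖ ≤ ‖p.1‖ + ‖p.2‖ := norm_sub_le _ _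
        _ ≤ 8 * 2 ^ k * R := by linarith
  -- key pointwise inequality
  have hkey : ∀ p ∈ P, f p ≤ M * w p := by
    intro p hp
    obtain ⟨hx1, hx2, hy1, hy2, hd0, hd8⟩ := hgeo p hp
    simp only [hfdef, hgdef, hwdef]
    have hQ0 : 0 ≤ |u p.1 - u p.2| / ‖p.1 - p.2‖ ^ s :=
      div_nonneg (abs_nonneg _) (Real.rpow_nonneg (norm_nonneg _) _)
    have hds : (0:ℝ) < ‖p.1 - p.2‖ ^ s := Real.rpow_pos_of_pos hd0 _
    have e1 : |u p.1 - u p.2| = ‖p.1 - p.2‖ ^ s * (|u p.1 - u p.2| / ‖p.1 - p.2‖ ^ s) := by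
      field_simp
    have hXd : ((2:ℝ) ^ k) ^ α₁ ≤ ‖p.1‖ ^ α₁ / c₁ := by
      rw [le_div_iff₀ hc₁0, hc₁]
      exact rpow_scaled_lower hq0 hR hx1 hx2
    have hYd : ((2:ℝ) ^ k) ^ α₂ ≤ ‖p.2‖ ^ α₂ / c₂ := by
      rw [le_div_iff₀ hc₂0, hc₂]
      exact rpow_scaled_lower hq0 (by linarith) hy1 hy2
    have hqs : ((2:ℝ) ^ k) ^ (-γ) * ((2:ℝ) ^ k) ^ s = ((2:ℝ) ^ k) ^ α₁ * ((2:ℝ) ^ k) ^ α₂ := by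
      rw [← Real.rpow_add hq0, ← Real.rpow_add hq0]
      congr 1
      rw [hγ]; ring
    calc ((2:ℝ) ^ k) ^ (-γ) * |u p.1 - u p.2|
        = ((2:ℝ) ^ k) ^ (-γ) * (‖p.1 - p.2‖ ^ s * (|u p.1 - u p.2| / ‖p.1 - p.2‖ ^ s)) := by
          rw [← e1]
      _ ≤ ((2:ℝ) ^ k) ^ (-γ) * ((8 * 2 ^ k * R) ^ s * (|u p.1 - u p.2| / ‖p.1 - p.2‖ ^ s)) := by
          refine mul_le_mul_of_nonneg_left ?_ (Real.rpow_nonneg hq0.le _)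
          exact mul_le_mul_of_nonneg_right
            (Real.rpow_le_rpow (norm_nonneg _) hd8 hs0.le) hQ0
      _ = (8 * R) ^ s * (((2:ℝ) ^ k) ^ α₁ * ((2:ℝ) ^ k) ^ α₂) *
            (|u p.1 - u p.2| / ‖p.1 - p.2‖ ^ s) := by
          rw [show (8:ℝ) * 2 ^ k * R = 2 ^ k * (8 * R) by ring,
            Real.mul_rpow hq0.le (by positivity)]
          calc ((2:ℝ) ^ k) ^ (-γ) * (((2:ℝ) ^ k) ^ s * (8 * R) ^ s *
                (|u p.1 - u p.2| / ‖p.1 - p.2‖ ^ s))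
              = (((2:ℝ) ^ k) ^ (-γ) * ((2:ℝ) ^ k) ^ s) * ((8 * R) ^ s *
                (|u p.1 - u p.2| / ‖p.1 - p.2‖ ^ s)) := by ring
            _ = (8 * R) ^ s * (((2:ℝ) ^ k) ^ α₁ * ((2:ℝ) ^ k) ^ α₂) *
                (|u p.1 - u p.2| / ‖p.1 - p.2‖ ^ s) := by rw [hqs]; ring
      _ ≤ (8 * R) ^ s * (‖p.1‖ ^ α₁ / c₁ * (‖p.2‖ ^ α₂ / c₂)) *
            (|u p.1 - u p.2| / ‖p.1 - p.2‖ ^ s) := by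
          refine mul_le_mul_of_nonneg_right (mul_le_mul_of_nonneg_left ?_
            (Real.rpow_nonneg (by positivity) _)) hQ0
          exact mul_le_mul hXd hYd (Real.rpow_nonneg hq0.le _)
            (le_trans (Real.rpow_nonneg hq0.le _) hXd)
      _ = M * (‖p.1‖ ^ α₁ * ‖p.2‖ ^ α₂ * (|u p.1 - u p.2| / ‖p.1 - p.2‖ ^ s)) := by
          rw [hM]
          field_simp
  have hΦkey : ∀ p ∈ P, Φ (f p) ≤ K * Ψ (w p) := by
    intro p hp
    rw [hΨeq _ (hw_nn p)]
    calc Φ (f p) ≤ Φ (M * w p) := OrliczAux.mono hΦ (hf_nn p) (hkey p hp)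
      _ ≤ K * Φ (w p) := hKle _ (hw_nn p)
  -- integrability
  have hint_g : IntegrableOn g P π := hInt g hg_m (2 * Mu) fun p _ => hgb p
  have hint_f : IntegrableOn f P π := by
    refine hInt f hf_m (((2:ℝ) ^ k) ^ (-γ) * (2 * Mu)) fun p _ => ?_
    rw [abs_of_nonneg (hf_nn p)]
    simp only [hfdef]
    exact mul_le_mul_of_nonneg_left (hgb p) (Real.rpow_nonneg hq0.le _)
  have hint_Ψf : IntegrableOn (fun p => Ψ (f p)) P π := by
    refine hInt _ (hΨc.measurable.comp hf_m) (Φ (((2:ℝ) ^ k) ^ (-γ) * (2 * Mu)))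
      fun p hp => ?_
    rw [abs_of_nonneg (hΨnn _), hΨeq _ (hf_nn p)]
    refine OrliczAux.mono hΦ (hf_nn p) ?_
    simp only [hfdef]
    exact mul_le_mul_of_nonneg_left (hgb p) (Real.rpow_nonneg hq0.le _)
  have hwb : ∀ p ∈ P, w p ≤
      max ((2 ^ k * R) ^ α₁) ((2 ^ k * (4 * R)) ^ α₁) *
      max ((2 ^ k * (2 * R)) ^ α₂) ((2 ^ k * (4 * R)) ^ α₂) *
      ((L:ℝ) * (8 * 2 ^ k * R) ^ (1 - s)) := by
    intro p hp
    obtain ⟨hx1, hx2, hy1, hy2, hd0, hd8⟩ := hgeo p hp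
    simp only [hwdef]
    have hds : (0:ℝ) < ‖p.1 - p.2‖ ^ s := Real.rpow_pos_of_pos hd0 _
    have hQb : |u p.1 - u p.2| / ‖p.1 - p.2‖ ^ s ≤ (L:ℝ) * (8 * 2 ^ k * R) ^ (1 - s) := by
      have h1 : |u p.1 - u p.2| / ‖p.1 - p.2‖ ^ s ≤ (L:ℝ) * ‖p.1 - p.2‖ / ‖p.1 - p.2‖ ^ s :=
        (div_le_div_iff_of_pos_right hds).mpr (hLip _ _)
      have h2 : (L:ℝ) * ‖p.1 - p.2‖ / ‖p.1 - p.2‖ ^ s = (L:ℝ) * ‖p.1 - p.2‖ ^ (1 - s) := by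
        rw [Real.rpow_sub hd0, Real.rpow_one]
        ring
      refine h1.trans ?_
      rw [h2]
      exact mul_le_mul_of_nonneg_left
        (Real.rpow_le_rpow (norm_nonneg _) hd8 (by linarith)) L.coe_nonneg
    have hX : ‖p.1‖ ^ α₁ ≤ max ((2 ^ k * R) ^ α₁) ((2 ^ k * (4 * R)) ^ α₁) :=
      (rpow_bounds (by positivity) hx1 hx2).2
    have hY : ‖p.2‖ ^ α₂ ≤ max ((2 ^ k * (2 * R)) ^ α₂) ((2 ^ k * (4 * R)) ^ α₂) :=
      (rpow_bounds (by positivity) hy1 hy2).2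
    have hXnn : (0:ℝ) ≤ ‖p.1‖ ^ α₁ := Real.rpow_nonneg (norm_nonneg _) _
    have hYnn : (0:ℝ) ≤ ‖p.2‖ ^ α₂ := Real.rpow_nonneg (norm_nonneg _) _
    have hQ0 : 0 ≤ |u p.1 - u p.2| / ‖p.1 - p.2‖ ^ s :=
      div_nonneg (abs_nonneg _) (Real.rpow_nonneg (norm_nonneg _) _)
    refine mul_le_mul (mul_le_mul hX hY hYnn (le_trans hXnn hX)) hQb hQ0 ?_
    exact mul_nonneg (le_trans hXnn hX) (le_trans hYnn hY)
  have hint_Ψw : IntegrableOn (fun p => Ψ (w p)) P π := by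
    refine hInt _ (hΨc.measurable.comp hw_m)
      (Φ (max ((2 ^ k * R) ^ α₁) ((2 ^ k * (4 * R)) ^ α₁) *
        max ((2 ^ k * (2 * R)) ^ α₂) ((2 ^ k * (4 * R)) ^ α₂) *
        ((L:ℝ) * (8 * 2 ^ k * R) ^ (1 - s)))) fun p hp => ?_
    rw [abs_of_nonneg (hΨnn _), hΨeq _ (hw_nn p)]
    exact OrliczAux.mono hΦ (hw_nn p) (hwb p hp)

  -- averages
  haveI instS : IsFiniteMeasure (volume.restrict S) :=
    ⟨by rw [Measure.restrict_apply_univ]; exact hSfin.lt_top⟩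
  haveI instT : IsFiniteMeasure (volume.restrict T) :=
    ⟨by rw [Measure.restrict_apply_univ]; exact hTfin.lt_top⟩
  have hu_int_S : Integrable u (volume.restrict S) :=
    Integrable.mono' (integrable_const Mu) hu_m.aestronglyMeasurable
      (ae_of_all _ fun x => hMu x)
  have hu_int_T : Integrable u (volume.restrict T) :=
    Integrable.mono' (integrable_const Mu) hu_m.aestronglyMeasurable
      (ae_of_all _ fun x => hMu x)
  have hint_g' : Integrable g ((volume.restrict S).prod (volume.restrict T)) := by
    rw [← hres]; exact hint_g
  have havg : ⨍ p in P, g p ∂π = (⨍ x in S, u x) - ⨍ x in T, u x := by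
    rw [setAverage_eq, setAverage_eq, setAverage_eq, smul_eq_mul, smul_eq_mul, smul_eq_mul]
    have h1 : ∫ p in P, g p ∂π = ∫ p, g p ∂((volume.restrict S).prod (volume.restrict T)) := by
      rw [hres]
    have hinner : ∀ x, (∫ y, g (x, y) ∂(volume.restrict T)) = mT * u x - ∫ y in T, u y := by
      intro x
      simp only [hgdef]
      rw [integral_sub (integrable_const _) hu_int_T, integral_const,
        measureReal_restrict_apply_univ, measureReal_def, smul_eq_mul, ← hmT]
    have h2 : ∫ p, g p ∂((volume.restrict S).prod (volume.restrict T))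
        = mT * (∫ x in S, u x) - mS * ∫ y in T, u y := by
      rw [integral_prod _ hint_g']
      calc (∫ x, ∫ y, g (x, y) ∂(volume.restrict T) ∂(volume.restrict S))
          = ∫ x, (mT * u x - ∫ y in T, u y) ∂(volume.restrict S) := by
            exact integral_congr_ae (ae_of_all _ hinner)
        _ = mT * (∫ x in S, u x) - mS * ∫ y in T, u y := by
            rw [integral_sub (hu_int_S.const_mul mT) (integrable_const _),
              integral_const, measureReal_restrict_apply_univ, measureReal_def, smul_eq_mul, ← hmS,
              integral_const_mul]
    simp only [measureReal_def]
    rw [h1, h2, hπPr, ← hmS, ← hmT]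
    field_simp
  have habs : ((2:ℝ) ^ k) ^ (-γ) * |(⨍ x in S, u x) - ⨍ x in T, u x| ≤ ⨍ p in P, f p ∂π := by
    rw [← havg, setAverage_eq, setAverage_eq, smul_eq_mul, smul_eq_mul]
    have hfP : ∫ p in P, f p ∂π = ((2:ℝ) ^ k) ^ (-γ) * ∫ p in P, |g p| ∂π := by
      simp only [hfdef]
      exact integral_const_mul _ _
    rw [hfP]
    have hc : (0:ℝ) ≤ ((π P).toReal)⁻¹ := inv_nonneg.mpr ENNReal.toReal_nonneg
    have habs2 : |∫ p in P, g p ∂π| ≤ ∫ p in P, |g p| ∂π := by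
      simpa [Real.norm_eq_abs] using norm_integral_le_integral_norm (μ := π.restrict P) g
    calc ((2:ℝ) ^ k) ^ (-γ) * |(π P).toReal⁻¹ * ∫ p in P, g p ∂π|
        = (π P).toReal⁻¹ * (((2:ℝ) ^ k) ^ (-γ) * |∫ p in P, g p ∂π|) := by
          rw [abs_mul, abs_of_nonneg hc]; ring
      _ ≤ (π P).toReal⁻¹ * (((2:ℝ) ^ k) ^ (-γ) * ∫ p in P, |g p| ∂π) := by
          refine mul_le_mul_of_nonneg_left ?_ hc
          exact mul_le_mul_of_nonneg_left habs2 (Real.rpow_nonneg hq0.le _)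
  have hint_Phif : IntegrableOn (Φ ∘ f) P π := by
    have he : Φ ∘ f = fun p => Ψ (f p) := funext fun p => (hΨeq _ (hf_nn p)).symm
    rw [he]
    exact hint_Ψf
  have hJ : Φ (⨍ p in P, f p ∂π) ≤ ⨍ p in P, Φ (f p) ∂π :=
    hΦ.convexOn.map_set_average_le hΦ.continuousOn isClosed_Ici hπP0 hπPfin
      (ae_of_all _ fun p => mem_Ici.mpr (hf_nn p)) hint_f hint_Phif
  have hIrealnn : 0 ≤ ∫ p in P, Ψ (w p) ∂π := integral_nonneg fun p => hΨnn _
  have hmono2 : ⨍ p in P, Φ (f p) ∂π ≤ (π P).toReal⁻¹ * (K * ∫ p in P, Ψ (w p) ∂π) := by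
    rw [setAverage_eq, smul_eq_mul]
    refine mul_le_mul_of_nonneg_left ?_ (inv_nonneg.mpr ENNReal.toReal_nonneg)
    have h1 : ∫ p in P, Φ (f p) ∂π ≤ ∫ p in P, K * Ψ (w p) ∂π := by
      refine integral_mono_ae ?_ (hint_Ψw.const_mul K) ?_
      · have he : (fun p => Φ (f p)) = fun p => Ψ (f p) :=
          funext fun p => (hΨeq _ (hf_nn p)).symm
        rw [he]
        exact hint_Ψf
      · exact (ae_restrict_iff' hPmeas).mpr (ae_of_all _ fun p hp => hΦkey p hp)
    rwa [integral_const_mul] at h1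
  have hreal : Φ (((2:ℝ) ^ k) ^ (-γ) * |(⨍ x in S, u x) - ⨍ x in T, u x|)
      ≤ (π P).toReal⁻¹ * K * ∫ p in P, Ψ (w p) ∂π := by
    calc Φ (((2:ℝ) ^ k) ^ (-γ) * |(⨍ x in S, u x) - ⨍ x in T, u x|)
        ≤ Φ (⨍ p in P, f p ∂π) := OrliczAux.mono hΦ
          (mul_nonneg (Real.rpow_nonneg hq0.le _) (abs_nonneg _)) habs
      _ ≤ ⨍ p in P, Φ (f p) ∂π := hJ
      _ ≤ (π P).toReal⁻¹ * (K * ∫ p in P, Ψ (w p) ∂π) := hmono2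
      _ = (π P).toReal⁻¹ * K * ∫ p in P, Ψ (w p) ∂π := by ring
  -- pass to ENNReal
  have hpw : (2:ℝ) ^ (-(k:ℝ) * γ) = ((2:ℝ) ^ k) ^ (-γ) := by
    rw [show -(k:ℝ) * γ = (k:ℝ) * (-γ) by ring,
      Real.rpow_mul (by norm_num : (0:ℝ) ≤ 2), Real.rpow_intCast]
  have htwoN : (2:ℝ) ^ (-(k:ℝ) * (N:ℝ)) = (((2:ℝ) ^ k) ^ N)⁻¹ := by
    rw [show -(k:ℝ) * (N:ℝ) = (k:ℝ) * (-(N:ℝ)) by ring,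
      Real.rpow_mul (by norm_num : (0:ℝ) ≤ 2), Real.rpow_intCast,
      Real.rpow_neg hq0.le, Real.rpow_natCast]
  have hFm : Measurable (fun p : EuclideanSpace ℝ (Fin N) × EuclideanSpace ℝ (Fin N) =>
      ENNReal.ofReal (Φ (‖p.1‖ ^ α₁ * ‖p.2‖ ^ α₂ * (|u p.1 - u p.2| / ‖p.1 - p.2‖ ^ s)) /
        ‖p.1 - p.2‖ ^ (N:ℝ))) := by
    have harg : ∀ p : EuclideanSpace ℝ (Fin N) × EuclideanSpace ℝ (Fin N),
        Φ (‖p.1‖ ^ α₁ * ‖p.2‖ ^ α₂ * (|u p.1 - u p.2| / ‖p.1 - p.2‖ ^ s)) = Ψ (w p) :=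
      fun p => (hΨeq _ (hw_nn p)).symm
    simp only [harg]
    exact ((hΨc.measurable.comp hw_m).div
      ((meas_rpow_const (N:ℝ)).comp hnorm_m)).ennreal_ofReal
  have hc0 : (0:ℝ) ≤ (π P).toReal⁻¹ * K :=
    mul_nonneg (inv_nonneg.mpr ENNReal.toReal_nonneg) hK0.le
  have h8R : (0:ℝ) ≤ (8 * 2 ^ k * R) ^ N :=
    pow_nonneg (by positivity) N
  have hmSv : mS = (2 ^ k * R) ^ N * W := by rw [hmS, hvolAr k, hrk]
  have hmTv : mT = (2 * 2 ^ k * R) ^ N * W := by rw [hmT, hvolAr (k + 1), hrk1]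
  have hconst : ((π P).toReal⁻¹ * K) * (8 * 2 ^ k * R) ^ N
      = K * (8 * R) ^ N / (2 ^ N * V ^ 2) * ((2:ℝ) ^ (-(k:ℝ) * (N:ℝ))) := by
    rw [htwoN, hπPr, hmSv, hmTv, hV]
    have h2k : ((2:ℝ) ^ k) ≠ 0 := hq0.ne'
    field_simp
    ring
  rw [hpw]
  calc ENNReal.ofReal (Φ (((2:ℝ) ^ k) ^ (-γ) * |(⨍ x in S, u x) - ⨍ x in T, u x|))
      ≤ ENNReal.ofReal ((π P).toReal⁻¹ * K * ∫ p in P, Ψ (w p) ∂π) :=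
        ENNReal.ofReal_le_ofReal hreal
    _ = ENNReal.ofReal ((π P).toReal⁻¹ * K) * ENNReal.ofReal (∫ p in P, Ψ (w p) ∂π) :=
        ENNReal.ofReal_mul hc0
    _ = ENNReal.ofReal ((π P).toReal⁻¹ * K) *
          ∫⁻ p in P, ENNReal.ofReal (Ψ (w p)) ∂π := by
        rw [ofReal_integral_eq_lintegral_ofReal hint_Ψw (ae_of_all _ fun p => hΨnn _)]
    _ ≤ ENNReal.ofReal ((π P).toReal⁻¹ * K) * (ENNReal.ofReal ((8 * 2 ^ k * R) ^ N) *
          ∫⁻ p in P, ENNReal.ofReal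
            (Φ (‖p.1‖ ^ α₁ * ‖p.2‖ ^ α₂ * (|u p.1 - u p.2| / ‖p.1 - p.2‖ ^ s)) /
              ‖p.1 - p.2‖ ^ (N:ℝ)) ∂π) := by
        refine mul_le_mul_right ?_ _
        rw [← lintegral_const_mul' _ _ ENNReal.ofReal_ne_top]
        refine lintegral_mono_ae ((ae_restrict_iff' hPmeas).mpr (ae_of_all _ fun p hp => ?_))
        obtain ⟨_, _, _, _, hd0, hd8⟩ := hgeo p hp
        have harg : Φ (‖p.1‖ ^ α₁ * ‖p.2‖ ^ α₂ * (|u p.1 - u p.2| / ‖p.1 - p.2‖ ^ s))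
            = Φ (w p) := by rw [hwdef]
        have hdNpos : (0:ℝ) < ‖p.1 - p.2‖ ^ (N:ℝ) := Real.rpow_pos_of_pos hd0 _
        have hdN : ‖p.1 - p.2‖ ^ (N:ℝ) ≤ (8 * 2 ^ k * R) ^ N := by
          rw [← Real.rpow_natCast (8 * 2 ^ k * R) N]
          exact Real.rpow_le_rpow (norm_nonneg _) hd8 (Nat.cast_nonneg N)
        rw [hΨeq _ (hw_nn p), ← ENNReal.ofReal_mul h8R, harg]
        refine ENNReal.ofReal_le_ofReal ?_
        calc Φ (w p) = Φ (w p) / ‖p.1 - p.2‖ ^ (N:ℝ) * ‖p.1 - p.2‖ ^ (N:ℝ) := by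
              field_simp
          _ ≤ Φ (w p) / ‖p.1 - p.2‖ ^ (N:ℝ) * (8 * 2 ^ k * R) ^ N :=
              mul_le_mul_of_nonneg_left hdN
                (div_nonneg (OrliczAux.nonneg hΦ (hw_nn p)) hdNpos.le)
          _ = (8 * 2 ^ k * R) ^ N * (Φ (w p) / ‖p.1 - p.2‖ ^ (N:ℝ)) := by ring
    _ ≤ ENNReal.ofReal ((π P).toReal⁻¹ * K) * (ENNReal.ofReal ((8 * 2 ^ k * R) ^ N) *
          ∫⁻ p in (S ∪ T) ×ˢ (S ∪ T), ENNReal.ofReal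
            (Φ (‖p.1‖ ^ α₁ * ‖p.2‖ ^ α₂ * (|u p.1 - u p.2| / ‖p.1 - p.2‖ ^ s)) /
              ‖p.1 - p.2‖ ^ (N:ℝ)) ∂π) := by
        refine mul_le_mul_right (mul_le_mul_right (lintegral_mono_set ?_) _) _
        rw [hP]
        exact Set.prod_mono subset_union_left subset_union_right
    _ = ENNReal.ofReal ((π P).toReal⁻¹ * K) * (ENNReal.ofReal ((8 * 2 ^ k * R) ^ N) *
          ∫⁻ x in S ∪ T, ∫⁻ y in S ∪ T, ENNReal.ofReal
            (Φ (‖x‖ ^ α₁ * ‖y‖ ^ α₂ * (|u x - u y| / ‖x - y‖ ^ s)) /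
              ‖x - y‖ ^ (N:ℝ))) := by
        rw [hπ, ← Measure.prod_restrict, lintegral_prod _ hFm.aemeasurable]
    _ = ENNReal.ofReal (K * (8 * R) ^ N / (2 ^ N * V ^ 2) * (2:ℝ) ^ (-(k:ℝ) * (N:ℝ))) *
          ∫⁻ x in S ∪ T, ∫⁻ y in S ∪ T, ENNReal.ofReal
            (Φ (‖x‖ ^ α₁ * ‖y‖ ^ α₂ * (|u x - u y| / ‖x - y‖ ^ s)) /
              ‖x - y‖ ^ (N:ℝ)) := by
        rw [← mul_assoc, ← ENNReal.ofReal_mul hc0, hconst]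
end

section
/- For S(t) = t^p + t^q with q > p > 1, one has p⁻_S = inf_{t>0} tS'(t)/S(t) = p and p⁺_S = sup_{t>0} tS'(t)/S(t) = q. Moreover, if Ψ is any Orlicz function equivalent to S (i.e. C₁S(t) ≤ Ψ(t) ≤ C₂S(t) for all t ≥ 0 and some C₁, C₂ > 0), then p⁻_Ψ ≤ p and p⁺_Ψ ≥ q; hence p^⊖_S = p and p^⊕_S = q, the supremum/infimum of p⁻_Ψ and p⁺_Ψ over all equivalent Ψ being attained at S itself. -/
open Set Filter MeasureTheory

lemma orlicz_hasDerivWithinAt {Ψ ψ : ℝ → ℝ} (h : IsOrliczPair Ψ ψ) {u : ℝ} (hu : 0 ≤ u) :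
    HasDerivWithinAt Ψ (ψ u) (Ici u) u := by
  set g : ℝ → ℝ := fun s => if s < 0 then 0 else ψ s with hg_def
  have hgeq : ∀ s, 0 ≤ s → g s = ψ s := fun s hs => if_neg (not_lt.2 hs)
  have hψ0 : ∀ s, 0 ≤ s → 0 ≤ ψ s := fun s hs => by
    have := h.deriv_mono (self_mem_Ici) hs hs
    rw [h.deriv_zero] at this; exact this
  have hg : Monotone g := by
    intro x y hxy
    by_cases hx : x < 0
    · simp only [hg_def, if_pos hx]
      by_cases hy : y < 0
      · simp [if_pos hy]
      · rw [if_neg hy]; exact hψ0 y (not_lt.1 hy)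
    · have hy : ¬ y < 0 := fun hy => hx (lt_of_le_of_lt hxy hy)
      simp only [hg_def, if_neg hx, if_neg hy]
      exact h.deriv_mono (not_lt.1 hx) (not_lt.1 hy) hxy
  have hint : IntervalIntegrable g volume 0 u := hg.intervalIntegrable
  have hmeas : StronglyMeasurableAtFilter g (nhdsWithin u (Ioi u)) :=
    ⟨Set.univ, Filter.univ_mem, hg.measurable.aestronglyMeasurable.restrict⟩
  have hcont : ContinuousWithinAt g (Ioi u) u :=
    (((h.deriv_rightCont u hu).congr (fun x hx => hgeq x (le_trans hu hx))
      (hgeq u hu)).mono Ioi_subset_Ici_self)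
  have hF : HasDerivWithinAt (fun t => ∫ s in (0:ℝ)..t, g s) (g u) (Ici u) u :=
    intervalIntegral.integral_hasDerivWithinAt_right hint hmeas hcont
  rw [hgeq u hu] at hF
  refine HasDerivWithinAt.congr hF ?_ ?_
  · intro x hx
    rw [h.rep x (le_trans hu hx)]
    refine intervalIntegral.integral_congr ?_
    intro s hs
    rw [uIcc_of_le (le_trans hu hx)] at hs
    exact (hgeq s hs.1).symm
  · rw [h.rep u hu]
    refine intervalIntegral.integral_congr ?_
    intro s hs
    rw [uIcc_of_le hu] at hs
    exact (hgeq s hs.1).symm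

lemma orlicz_div_rpow_deriv {Ψ ψ : ℝ → ℝ} (h : IsOrliczPair Ψ ψ) (m : ℝ) {x : ℝ} (hx : 0 < x) :
    HasDerivWithinAt (fun u => Ψ u / u ^ m)
      ((ψ x * x ^ m - Ψ x * (m * x ^ (m - 1))) / (x ^ m) ^ 2) (Ici x) x :=
  (orlicz_hasDerivWithinAt h hx.le).div
    ((Real.hasDerivAt_rpow_const (Or.inl hx.ne')).hasDerivWithinAt)
    (ne_of_gt (Real.rpow_pos_of_pos hx m))

lemma orlicz_div_rpow_cont {Ψ ψ : ℝ → ℝ} (h : IsOrliczPair Ψ ψ) (m : ℝ) {a b : ℝ} (ha : 0 < a) :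
    ContinuousOn (fun u => Ψ u / u ^ m) (Icc a b) := by
  apply ContinuousOn.div
  · exact h.continuousOn.mono (fun x hx => le_trans ha.le hx.1)
  · intro x hx
    exact (Real.continuousAt_rpow_const x m
      (Or.inl (ne_of_gt (lt_of_lt_of_le ha hx.1)))).continuousWithinAt
  · intro x hx
    exact ne_of_gt (Real.rpow_pos_of_pos (lt_of_lt_of_le ha hx.1) m)

lemma deriv_sign_aux {Ψ ψ : ℝ → ℝ} (m : ℝ) {x : ℝ} (hx : 0 < x) :
    ψ x * x ^ m - Ψ x * (m * x ^ (m - 1)) = x ^ (m - 1) * (x * ψ x - m * Ψ x) := by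
  have h1 : x ^ m = x ^ (m - 1) * x := by
    rw [← Real.rpow_add_one hx.ne' (m - 1)]; ring_nf
  rw [h1]; ring

lemma orlicz_ratio_mono {Ψ ψ : ℝ → ℝ} (h : IsOrliczPair Ψ ψ) {m : ℝ}
    (hm : ∀ u > 0, m * Ψ u ≤ u * ψ u) {a b : ℝ} (ha : 0 < a) (hab : a ≤ b) :
    Ψ a / a ^ m ≤ Ψ b / b ^ m := by
  have key := image_le_of_deriv_right_le_deriv_boundary
      (f := fun _ : ℝ => Ψ a / a ^ m) (f' := fun _ : ℝ => (0 : ℝ)) (a := a) (b := b)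
      continuousOn_const (fun x _ => (hasDerivWithinAt_const x _ _))
      (le_refl _) (orlicz_div_rpow_cont h m ha)
      (fun x hx => orlicz_div_rpow_deriv h m (lt_of_lt_of_le ha hx.1)) ?_
  · exact key (right_mem_Icc.2 hab)
  · intro x hx
    have hx0 : 0 < x := lt_of_lt_of_le ha hx.1
    show (0:ℝ) ≤ (ψ x * x ^ m - Ψ x * (m * x ^ (m - 1))) / (x ^ m) ^ 2
    rw [deriv_sign_aux m hx0]
    have h2 := hm x hx0
    have hp : (0:ℝ) < x ^ (m - 1) := Real.rpow_pos_of_pos hx0 _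
    exact div_nonneg (mul_nonneg hp.le (by linarith)) (sq_nonneg _)

lemma orlicz_ratio_anti {Ψ ψ : ℝ → ℝ} (h : IsOrliczPair Ψ ψ) {m : ℝ}
    (hm : ∀ u > 0, u * ψ u ≤ m * Ψ u) {a b : ℝ} (ha : 0 < a) (hab : a ≤ b) :
    Ψ b / b ^ m ≤ Ψ a / a ^ m := by
  have key := image_le_of_deriv_right_le_deriv_boundary
      (f := fun u => Ψ u / u ^ m)
      (f' := fun x => (ψ x * x ^ m - Ψ x * (m * x ^ (m - 1))) / (x ^ m) ^ 2) (a := a) (b := b)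
      (orlicz_div_rpow_cont h m ha)
      (fun x hx => orlicz_div_rpow_deriv h m (lt_of_lt_of_le ha hx.1))
      (B := fun _ => Ψ a / a ^ m) (B' := fun _ => (0:ℝ))
      (le_refl _) continuousOn_const (fun x _ => hasDerivWithinAt_const x _ _) ?_
  · exact key (right_mem_Icc.2 hab)
  · intro x hx
    have hx0 : 0 < x := lt_of_lt_of_le ha hx.1
    show (ψ x * x ^ m - Ψ x * (m * x ^ (m - 1))) / (x ^ m) ^ 2 ≤ (0:ℝ)
    rw [deriv_sign_aux m hx0]
    have h2 := hm x hx0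
    have hp : (0:ℝ) < x ^ (m - 1) := Real.rpow_pos_of_pos hx0 _
    have hnum : x ^ (m - 1) * (x * ψ x - m * Ψ x) ≤ 0 :=
      mul_nonpos_of_nonneg_of_nonpos hp.le (by linarith)
    exact div_nonpos_of_nonpos_of_nonneg hnum (sq_nonneg _)


lemma ratio_formula_zero {p q t : ℝ} (ht : 0 < t) :
    t * (p * t ^ (p - 1) + q * t ^ (q - 1)) / (t ^ p + t ^ q)
      = (p + q * t ^ (q - p)) / (1 + t ^ (q - p)) := by
  have h1 : t ^ (p - 1) * t = t ^ p := by
    rw [← Real.rpow_add_one ht.ne' (p - 1)]; ring_nf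
  have h2 : t ^ (q - 1) * t = t ^ q := by
    rw [← Real.rpow_add_one ht.ne' (q - 1)]; ring_nf
  have h3 : t ^ p * t ^ (q - p) = t ^ q := by
    rw [← Real.rpow_add ht]; ring_nf
  have hp0 : 0 < t ^ p := Real.rpow_pos_of_pos ht p
  have hq0 : 0 < t ^ q := Real.rpow_pos_of_pos ht q
  have he0 : 0 < t ^ (q - p) := Real.rpow_pos_of_pos ht _
  have hd1 : t ^ p + t ^ q ≠ 0 := by positivity
  have hd2 : 1 + t ^ (q - p) ≠ 0 := by positivity
  field_simp
  linear_combination ((1 + t ^ (q - p)) * p) * h1 + ((1 + t ^ (q - p)) * q) * h2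
    + (p - q) * h3

lemma ratio_formula_top {p q t : ℝ} (ht : 0 < t) :
    t * (p * t ^ (p - 1) + q * t ^ (q - 1)) / (t ^ p + t ^ q)
      = (p * t ^ (p - q) + q) / (t ^ (p - q) + 1) := by
  have h1 : t ^ (p - 1) * t = t ^ p := by
    rw [← Real.rpow_add_one ht.ne' (p - 1)]; ring_nf
  have h2 : t ^ (q - 1) * t = t ^ q := by
    rw [← Real.rpow_add_one ht.ne' (q - 1)]; ring_nf
  have h3 : t ^ q * t ^ (p - q) = t ^ p := by
    rw [← Real.rpow_add ht]; ring_nf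
  have hp0 : 0 < t ^ p := Real.rpow_pos_of_pos ht p
  have hq0 : 0 < t ^ q := Real.rpow_pos_of_pos ht q
  have he0 : 0 < t ^ (p - q) := Real.rpow_pos_of_pos ht _
  have hd1 : t ^ p + t ^ q ≠ 0 := by positivity
  have hd2 : t ^ (p - q) + 1 ≠ 0 := by positivity
  field_simp
  linear_combination ((t ^ (p - q) + 1) * p) * h1 + ((t ^ (p - q) + 1) * q) * h2
    + (q - p) * h3

lemma tendsto_ratio_zero {p q : ℝ} (hpq : p < q) :
    Tendsto (fun t : ℝ => (p + q * t ^ (q - p)) / (1 + t ^ (q - p)))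
      (nhdsWithin 0 (Ioi 0)) (nhds p) := by
  have he : Tendsto (fun t : ℝ => t ^ (q - p)) (nhdsWithin 0 (Ioi 0)) (nhds 0) := by
    have h0 := (Real.continuousAt_rpow_const 0 (q - p) (Or.inr (by linarith))).tendsto
    rw [Real.zero_rpow (ne_of_gt (sub_pos.2 hpq))] at h0
    exact h0.mono_left nhdsWithin_le_nhds
  have hA : Tendsto (fun t : ℝ => p + q * t ^ (q - p)) (nhdsWithin 0 (Ioi 0))
      (nhds (p + q * 0)) := tendsto_const_nhds.add (he.const_mul q)
  have hB : Tendsto (fun t : ℝ => 1 + t ^ (q - p)) (nhdsWithin 0 (Ioi 0))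
      (nhds (1 + 0)) := tendsto_const_nhds.add he
  have := hA.div hB (by norm_num)
  simp only [mul_zero, add_zero, zero_add, div_one] at this
  exact this

lemma tendsto_ratio_top {p q : ℝ} (hpq : p < q) :
    Tendsto (fun t : ℝ => (p * t ^ (p - q) + q) / (t ^ (p - q) + 1)) atTop (nhds q) := by
  have he : Tendsto (fun t : ℝ => t ^ (p - q)) atTop (nhds 0) := by
    have := tendsto_rpow_neg_atTop (y := q - p) (by linarith)
    simpa [neg_sub] using this
  have hA : Tendsto (fun t : ℝ => p * t ^ (p - q) + q) atTop (nhds (p * 0 + q)) :=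
    (he.const_mul p).add tendsto_const_nhds
  have hB : Tendsto (fun t : ℝ => t ^ (p - q) + 1) atTop (nhds (0 + 1)) :=
    he.add tendsto_const_nhds
  have := hA.div hB (by norm_num)
  simp only [mul_zero, add_zero, zero_add, div_one] at this
  exact this

/-- For `S(t) = t^p + t^q` with `1 < p < q`: `p⁻_S = p`, `p⁺_S = q`, and every
Orlicz function equivalent to `S` has `p⁻ ≤ p` and `p⁺ ≥ q`; hence
`p^⊖_S = p` and `p^⊕_S = q` are attained at `S` itself. -/
theorem sum_power_exponents (p q : ℝ) (hp : 1 < p) (hpq : p < q)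
    (S S' : ℝ → ℝ) (hS : ∀ t, S t = t ^ p + t ^ q)
    (hS' : ∀ t, S' t = p * t ^ (p - 1) + q * t ^ (q - 1)) :
    IsGLB (orliczRatioSet S S') p ∧ IsLUB (orliczRatioSet S S') q ∧
    ∀ Ψ ψ : ℝ → ℝ, IsOrliczPair Ψ ψ →
      (∃ C₁ > 0, ∃ C₂ > 0, ∀ t ≥ 0, C₁ * S t ≤ Ψ t ∧ Ψ t ≤ C₂ * S t) →
      ∀ pmΨ ppΨ : ℝ, IsGLB (orliczRatioSet Ψ ψ) pmΨ →
        IsLUB (orliczRatioSet Ψ ψ) ppΨ →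
        pmΨ ≤ p ∧ q ≤ ppΨ := by
  have hS0 : ∀ t : ℝ, 0 < t → 0 < S t := by
    intro t ht; rw [hS]
    have h1 := Real.rpow_pos_of_pos ht p
    have h2 := Real.rpow_pos_of_pos ht q
    linarith
  have hval : ∀ t : ℝ, 0 < t → t * S' t / S t = (p + q * t ^ (q - p)) / (1 + t ^ (q - p)) := by
    intro t ht; rw [hS, hS']; exact ratio_formula_zero ht
  have hval' : ∀ t : ℝ, 0 < t → t * S' t / S t = (p * t ^ (p - q) + q) / (t ^ (p - q) + 1) := by
    intro t ht; rw [hS, hS']; exact ratio_formula_top ht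
  have hlb : ∀ r ∈ orliczRatioSet S S', p ≤ r := by
    rintro r ⟨t, ht, rfl⟩
    rw [hval t ht]
    have he0 : (0:ℝ) < t ^ (q - p) := Real.rpow_pos_of_pos ht _
    rw [le_div_iff₀ (by linarith)]
    nlinarith [mul_le_mul_of_nonneg_right hpq.le he0.le]
  have hub : ∀ r ∈ orliczRatioSet S S', r ≤ q := by
    rintro r ⟨t, ht, rfl⟩
    rw [hval' t ht]
    have he0 : (0:ℝ) < t ^ (p - q) := Real.rpow_pos_of_pos ht _
    rw [div_le_iff₀ (by linarith)]
    nlinarith [mul_le_mul_of_nonneg_right hpq.le he0.le]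
  refine ⟨⟨hlb, ?_⟩, ⟨hub, ?_⟩, ?_⟩
  · intro b hb
    refine ge_of_tendsto (tendsto_ratio_zero hpq) ?_
    filter_upwards [self_mem_nhdsWithin] with t ht
    rw [← hval t ht]
    exact hb ⟨t, ht, rfl⟩
  · intro b hb
    refine le_of_tendsto (tendsto_ratio_top hpq) ?_
    filter_upwards [eventually_gt_atTop 0] with t ht
    rw [← hval' t ht]
    exact hb ⟨t, ht, rfl⟩
  · rintro Ψ ψ hpair ⟨C₁, hC₁, C₂, hC₂, hbd⟩ pm pp hpm hpp
    have hΨpos : ∀ t, 0 < t → 0 < Ψ t := fun t ht =>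
      lt_of_lt_of_le (mul_pos hC₁ (hS0 t ht)) (hbd t ht.le).1
    have hlow : ∀ u > 0, pm * Ψ u ≤ u * ψ u := by
      intro u hu
      have hm := hpm.1 ⟨u, hu, rfl⟩
      rw [le_div_iff₀ (hΨpos u hu)] at hm; linarith
    have hupp : ∀ u > 0, u * ψ u ≤ pp * Ψ u := by
      intro u hu
      have hm := hpp.1 ⟨u, hu, rfl⟩
      rw [div_le_iff₀ (hΨpos u hu)] at hm; linarith
    constructor
    · by_contra hc
      push_neg at hc
      have hmono : ∀ t : ℝ, 0 < t → t ≤ 1 → Ψ t ≤ Ψ 1 * t ^ pm := by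
        intro t ht ht1
        have key := orlicz_ratio_mono hpair hlow ht ht1
        rw [Real.one_rpow, div_one] at key
        rwa [div_le_iff₀ (Real.rpow_pos_of_pos ht pm)] at key
      have hev : ∀ᶠ t in nhdsWithin (0:ℝ) (Ioi 0), C₁ ≤ Ψ 1 * t ^ (pm - p) := by
        filter_upwards [Ioc_mem_nhdsGT_of_mem (Set.left_mem_Ico.2 one_pos)] with t htm
        obtain ⟨ht, ht1⟩ := htm
        have hp0 : (0:ℝ) < t ^ p := Real.rpow_pos_of_pos ht p
        have hq0 : (0:ℝ) < t ^ q := Real.rpow_pos_of_pos ht q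
        have h1 : C₁ * t ^ p ≤ Ψ t := by
          have hb1 := (hbd t ht.le).1
          rw [hS] at hb1
          nlinarith [hq0]
        have h2 := hmono t ht ht1
        have h3 : t ^ pm = t ^ (pm - p) * t ^ p := by
          rw [← Real.rpow_add ht]; ring_nf
        have h4 : C₁ * t ^ p ≤ Ψ 1 * t ^ (pm - p) * t ^ p := by
          rw [h3] at h2; nlinarith [h1, h2]
        exact le_of_mul_le_mul_right h4 hp0
      have hlim : Tendsto (fun t : ℝ => Ψ 1 * t ^ (pm - p)) (nhdsWithin 0 (Ioi 0)) (nhds 0) := by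
        have he : Tendsto (fun t : ℝ => t ^ (pm - p)) (nhdsWithin (0:ℝ) (Ioi 0)) (nhds 0) := by
          have h0 := (Real.continuousAt_rpow_const 0 (pm - p) (Or.inr (by linarith))).tendsto
          rw [Real.zero_rpow (ne_of_gt (by linarith : (0:ℝ) < pm - p))] at h0
          exact h0.mono_left nhdsWithin_le_nhds
        simpa using he.const_mul (Ψ 1)
      have hfin : C₁ ≤ 0 := ge_of_tendsto hlim hev
      linarith
    · by_contra hc
      push_neg at hc
      have hmono : ∀ t : ℝ, 1 ≤ t → Ψ t ≤ Ψ 1 * t ^ pp := by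
        intro t ht
        have key := orlicz_ratio_anti hpair hupp one_pos ht
        rw [Real.one_rpow, div_one] at key
        rwa [div_le_iff₀ (Real.rpow_pos_of_pos (lt_of_lt_of_le one_pos ht) pp)] at key
      have hev : ∀ᶠ t in atTop, C₁ * t ^ (q - pp) ≤ Ψ 1 := by
        filter_upwards [eventually_ge_atTop (1:ℝ)] with t ht1
        have ht : (0:ℝ) < t := lt_of_lt_of_le one_pos ht1
        have hp0 : (0:ℝ) < t ^ p := Real.rpow_pos_of_pos ht p
        have hpp0 : (0:ℝ) < t ^ pp := Real.rpow_pos_of_pos ht pp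
        have h1 : C₁ * t ^ q ≤ Ψ t := by
          have hb1 := (hbd t ht.le).1
          rw [hS] at hb1
          nlinarith [hp0]
        have h2 := hmono t ht1
        have h3 : t ^ q = t ^ (q - pp) * t ^ pp := by
          rw [← Real.rpow_add ht]; ring_nf
        have h4 : C₁ * t ^ (q - pp) * t ^ pp ≤ Ψ 1 * t ^ pp := by
          rw [h3] at h1; nlinarith [h1, h2]
        exact le_of_mul_le_mul_right h4 hpp0
      have hlim : Tendsto (fun t : ℝ => C₁ * t ^ (q - pp)) atTop atTop :=
        (tendsto_rpow_atTop (by linarith)).const_mul_atTop hC₁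
      obtain ⟨t, h5, h6⟩ := (hev.and (hlim.eventually (eventually_gt_atTop (Ψ 1)))).exists
      linarith
end
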